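/- arXiv:2512.05084 — 4 statements merged into one kernel-verified Lean document; each statement's English description precedes it below -/
import Mathlib

section
/- Fix integers d ≥ 1, H ≥ 1, a gradient threshold θ > 0, and a degree bound Δ ≥ 2. Let Π be the set of instances (x, f) with x ∈ ℝ^d and f : ℝ^d → ℝ a real polynomial of degree at most Δ, and for η ≥ 0 let ℓ_η : Π → {1, …, H} be the gradient-descent cost ℓ_η(x, f) = ℓ(η, x, f). Then there is a universal constant C such that the pseudo-dimension of the class L = {ℓ_η : η ∈ ℝ_{≥0}} is at most C·H·log Δ. -/
/-- Gradient-descent iterates: `gdIter f x η i` is the `(i+1)`-st iterate `x_{i+1}`,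
so `gdIter f x η 0 = x₁ = x` and `x_{i+1} = x_i - η ∇f(x_i)`. -/
noncomputable def gdIter {d : ℕ} (f : EuclideanSpace ℝ (Fin d) → ℝ)
    (x : EuclideanSpace ℝ (Fin d)) (η : ℝ) : ℕ → EuclideanSpace ℝ (Fin d)
  | 0 => x
  | i + 1 => gdIter f x η i - η • gradient f (gdIter f x η i)

/-- Gradient-descent cost: the smallest `i ∈ {1,…,H}` with `‖∇f(x_i)‖ < θ` if it exists,
and `H` otherwise. -/
noncomputable def gdCost {d : ℕ} (H : ℕ) (θ : ℝ) (f : EuclideanSpace ℝ (Fin d) → ℝ)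
    (x : EuclideanSpace ℝ (Fin d)) (η : ℝ) : ℕ :=
  sInf ({i | 1 ≤ i ∧ i ≤ H ∧ ‖gradient f (gdIter f x η (i - 1))‖ < θ} ∪ {H})

/-- `f : ℝ^d → ℝ` is a real polynomial of (total) degree at most `Δ`. -/
def IsPolyDeg {d : ℕ} (Δ : ℕ) (f : EuclideanSpace ℝ (Fin d) → ℝ) : Prop :=
  ∃ P : MvPolynomial (Fin d) ℝ, P.totalDegree ≤ Δ ∧
    ∀ y : EuclideanSpace ℝ (Fin d), f y = MvPolynomial.eval (fun j => y j) P

/-- A class `F` of real-valued functions on `X` pseudo-shatters a finite set `S`. -/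
def PseudoShatters {X : Type*} (F : Set (X → ℝ)) (S : Finset X) : Prop :=
  ∃ r : X → ℝ, ∀ b : X → Bool, ∃ f ∈ F, ∀ z ∈ S, (f z > r z ↔ b z = true)

open MvPolynomial

namespace GDPdim

variable {d : ℕ}

/-! ### The gradient of a multivariate polynomial -/

noncomputable def mvGrad (P : MvPolynomial (Fin d) ℝ) (y : EuclideanSpace ℝ (Fin d)) :
    EuclideanSpace ℝ (Fin d) :=
  WithLp.toLp 2 (fun j => MvPolynomial.eval (fun j' => y j') (MvPolynomial.pderiv j P))

lemma toDual_apply' (v z : EuclideanSpace ℝ (Fin d)) :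
    (InnerProductSpace.toDual ℝ (EuclideanSpace ℝ (Fin d)) v) z = ∑ j, v j * z j := by
  simp [InnerProductSpace.toDual_apply_apply, PiLp.inner_apply, mul_comm]

theorem hasGradientAt_mvpoly (P : MvPolynomial (Fin d) ℝ) (y : EuclideanSpace ℝ (Fin d)) :
    HasGradientAt (fun y : EuclideanSpace ℝ (Fin d) => MvPolynomial.eval (fun j => y j) P)
      (mvGrad P y) y := by
  induction P using MvPolynomial.induction_on with
  | C a =>
      have : (fun y : EuclideanSpace ℝ (Fin d) => MvPolynomial.eval (fun j => y j) (C a))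
          = fun _ => a := by funext y; simp
      rw [this]
      have hg : mvGrad (C a : MvPolynomial (Fin d) ℝ) y = 0 := by
        ext j; simp [mvGrad]
      rw [hg]
      exact hasGradientAt_const y a
  | add p q hp hq =>
      rw [hasGradientAt_iff_hasFDerivAt] at *
      have hsum := hp.add hq
      have heq : (fun y : EuclideanSpace ℝ (Fin d) => MvPolynomial.eval (fun j => y j) (p + q))
          = fun y => MvPolynomial.eval (fun j => y j) p + MvPolynomial.eval (fun j => y j) q := by
        funext y; simp
      rw [heq]
      refine hsum.congr_fderiv ?_
      symm
      ext z
      simp only [toDual_apply', ContinuousLinearMap.add_apply, mvGrad]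
      rw [← Finset.sum_add_distrib]
      congr 1; funext j
      simp [map_add, add_mul]
  | mul_X p n hp =>
      rw [hasGradientAt_iff_hasFDerivAt] at *
      have hx : HasFDerivAt (fun y : EuclideanSpace ℝ (Fin d) => y n)
          (EuclideanSpace.proj (𝕜 := ℝ) n) y := (EuclideanSpace.proj (𝕜 := ℝ) n).hasFDerivAt
      have hmul := hp.mul hx
      have heq : (fun y : EuclideanSpace ℝ (Fin d) => MvPolynomial.eval (fun j => y j) (p * X n))
          = fun y => (MvPolynomial.eval (fun j => y j) p) * y n := by
        funext y; simp
      rw [heq]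
      refine hmul.congr_fderiv ?_
      symm
      ext z
      simp only [toDual_apply', ContinuousLinearMap.add_apply, ContinuousLinearMap.smul_apply,
        smul_eq_mul, mvGrad]
      have hterm : ∀ j, MvPolynomial.eval (fun j' => y j') (pderiv j (p * X n)) =
          MvPolynomial.eval (fun j' => y j') (pderiv j p) * y n +
          (if j = n then MvPolynomial.eval (fun j' => y j') p else 0) := by
        intro j
        by_cases h : j = n
        · subst h; simp [pderiv_mul, pderiv_X_self]; ring
        · simp [pderiv_mul, pderiv_X_of_ne (Ne.symm h), h]; ring
      simp only [hterm, add_mul, ite_mul, zero_mul, Finset.sum_add_distrib,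
        Finset.sum_ite_eq' Finset.univ n, Finset.mem_univ, if_true, Finset.mul_sum]
      rw [add_comm]
      congr 1
      exact Finset.sum_congr rfl (fun j _ => by ring)

/-! ### The iterates as polynomials in the step size -/

noncomputable def qit (P : MvPolynomial (Fin d) ℝ) (x : EuclideanSpace ℝ (Fin d)) :
    ℕ → Fin d → Polynomial ℝ
  | 0 => fun j => Polynomial.C (x j)
  | i + 1 => fun j => qit P x i j -
      Polynomial.X * (MvPolynomial.aeval (qit P x i) (MvPolynomial.pderiv j P))

lemma eval_aeval (q : Fin d → Polynomial ℝ) (Q : MvPolynomial (Fin d) ℝ) (η : ℝ) :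
    (MvPolynomial.aeval q Q).eval η = MvPolynomial.eval (fun j => (q j).eval η) Q := by
  have h := MvPolynomial.comp_aeval (φ := Polynomial.aeval η) (f := q)
  have h2 := DFunLike.congr_fun h Q
  simpa [Polynomial.coe_aeval_eq_eval, MvPolynomial.coe_aeval_eq_eval] using h2

lemma natDegree_aeval_le (q : Fin d → Polynomial ℝ) (D : ℕ) (hq : ∀ j, (q j).natDegree ≤ D)
    (R : MvPolynomial (Fin d) ℝ) :
    (MvPolynomial.aeval q R).natDegree ≤ R.totalDegree * D := by
  rw [MvPolynomial.aeval_def, MvPolynomial.eval₂_eq]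
  refine (Polynomial.natDegree_sum_le _ _).trans ?_
  rw [Finset.fold_max_le]
  refine ⟨Nat.zero_le _, fun s hs => ?_⟩
  refine (Polynomial.natDegree_mul_le).trans ?_
  have h1 : (algebraMap ℝ (Polynomial ℝ) (MvPolynomial.coeff s R)).natDegree = 0 := by
    simp [Polynomial.natDegree_C]
  rw [h1, zero_add]
  refine (Polynomial.natDegree_prod_le _ _).trans ?_
  have h2 : ∑ i ∈ s.support, ((q i) ^ (s i)).natDegree ≤ ∑ i ∈ s.support, s i * D := by
    refine Finset.sum_le_sum fun i _ => ?_
    exact (Polynomial.natDegree_pow_le).trans (Nat.mul_le_mul_left _ (hq i))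
  refine h2.trans ?_
  rw [← Finset.sum_mul]
  exact Nat.mul_le_mul_right _ (MvPolynomial.le_totalDegree hs)

lemma totalDegree_pderiv_le (P : MvPolynomial (Fin d) ℝ) (j : Fin d) :
    (MvPolynomial.pderiv j P).totalDegree ≤ P.totalDegree := by
  conv_lhs => rw [P.as_sum]
  rw [map_sum]
  refine MvPolynomial.totalDegree_finsetSum_le fun s hs => ?_
  rw [MvPolynomial.pderiv_monomial]
  refine (MvPolynomial.totalDegree_monomial_le _ _).trans ?_
  refine le_trans ?_ (MvPolynomial.le_totalDegree hs)
  refine le_trans (Finset.sum_le_sum_of_subset (Finsupp.support_tsub)) ?_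
  exact Finset.sum_le_sum fun i _ => tsub_le_self

lemma qit_eval (P : MvPolynomial (Fin d) ℝ) (x : EuclideanSpace ℝ (Fin d))
    (f : EuclideanSpace ℝ (Fin d) → ℝ)
    (hf : ∀ y, f y = MvPolynomial.eval (fun j => y j) P) (η : ℝ) :
    ∀ i j, (qit P x i j).eval η = gdIter f x η i j := by
  have hfe : f = fun y => MvPolynomial.eval (fun j => y j) P := funext hf
  intro i
  induction i with
  | zero => intro j; simp [qit, gdIter]
  | succ i ih =>
      intro j
      have hgrad : gradient f (gdIter f x η i) = mvGrad P (gdIter f x η i) := by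
        rw [hfe]; exact (hasGradientAt_mvpoly P _).gradient
      have hstep : gdIter f x η (i+1) = gdIter f x η i - η • gradient f (gdIter f x η i) := rfl
      rw [hstep]
      have hc : (gdIter f x η i - η • gradient f (gdIter f x η i)) j
          = gdIter f x η i j - η * (gradient f (gdIter f x η i)) j := by
        simp [PiLp.sub_apply, PiLp.smul_apply]
      rw [hc, hgrad]
      show (qit P x i j - Polynomial.X *
        (MvPolynomial.aeval (qit P x i) (MvPolynomial.pderiv j P))).eval η = _
      rw [Polynomial.eval_sub, Polynomial.eval_mul, Polynomial.eval_X, eval_aeval]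
      have hcoord : (fun j' => (qit P x i j').eval η) = (fun j' => gdIter f x η i j') :=
        funext ih
      rw [ih j, hcoord]
      rfl

lemma qit_deg (P : MvPolynomial (Fin d) ℝ) (x : EuclideanSpace ℝ (Fin d)) {Δ : ℕ}
    (hΔ : 2 ≤ Δ) (hP : P.totalDegree ≤ Δ) :
    ∀ i j, (qit P x i j).natDegree + 1 ≤ 2 * Δ ^ i := by
  intro i
  induction i with
  | zero => intro j; simp [qit]
  | succ i ih =>
      intro j
      set a : ℕ := 2 * Δ ^ i - 1 with ha
      have hpos : 1 ≤ 2 * Δ ^ i := by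
        have : 0 < Δ ^ i := Nat.pow_pos (n := i) (by omega); omega
      have ha1 : a + 1 = 2 * Δ ^ i := Nat.sub_add_cancel hpos
      have hq : ∀ j', (qit P x i j').natDegree ≤ a := fun j' => by
        have := ih j'; omega
      have hae : (MvPolynomial.aeval (qit P x i) (MvPolynomial.pderiv j P)).natDegree ≤ Δ * a :=
        (natDegree_aeval_le _ a hq _).trans
          (Nat.mul_le_mul_right _ ((totalDegree_pderiv_le P j).trans hP))
      have hXae : (Polynomial.X *
          (MvPolynomial.aeval (qit P x i) (MvPolynomial.pderiv j P))).natDegree ≤ 1 + Δ * a :=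
        Polynomial.natDegree_mul_le.trans (by
          have := Polynomial.natDegree_X_le (R := ℝ); omega)
      have hsub := Polynomial.natDegree_sub_le (qit P x i j)
        (Polynomial.X * (MvPolynomial.aeval (qit P x i) (MvPolynomial.pderiv j P)))
      have h1 : (qit P x (i+1) j).natDegree ≤ max a (1 + Δ * a) := by
        refine le_trans ?_ (max_le_max (hq j) hXae)
        exact hsub
      have h2 : Δ * a + 2 ≤ 2 * Δ ^ (i + 1) := by
        calc Δ * a + 2 ≤ Δ * a + Δ := by omega
        _ = Δ * (a + 1) := by ring
        _ = Δ * (2 * Δ ^ i) := by rw [ha1]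
        _ = 2 * Δ ^ (i+1) := by ring
      have h3 : a + 1 ≤ 2 * Δ ^ (i+1) := by
        rw [ha1]
        have : Δ ^ i ≤ Δ ^ (i+1) := Nat.pow_le_pow_right (by omega) (by omega)
        omega
      omega

noncomputable def gp (P : MvPolynomial (Fin d) ℝ) (x : EuclideanSpace ℝ (Fin d)) (θ : ℝ)
    (i : ℕ) : Polynomial ℝ :=
  (∑ j, (MvPolynomial.aeval (qit P x i) (MvPolynomial.pderiv j P))^2) - Polynomial.C (θ^2)

lemma gp_deg (P : MvPolynomial (Fin d) ℝ) (x : EuclideanSpace ℝ (Fin d)) (θ : ℝ) {Δ : ℕ}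
    (hΔ : 2 ≤ Δ) (hP : P.totalDegree ≤ Δ) (i : ℕ) :
    (gp P x θ i).natDegree ≤ 4 * Δ ^ (i+1) := by
  refine (Polynomial.natDegree_sub_le _ _).trans (max_le ?_ (by simp))
  refine (Polynomial.natDegree_sum_le _ _).trans ?_
  rw [Finset.fold_max_le]
  refine ⟨Nat.zero_le _, fun j _ => ?_⟩
  have hq : ∀ j', (qit P x i j').natDegree ≤ 2 * Δ ^ i := fun j' => by
    have := qit_deg P x hΔ hP i j'; omega
  have hae : (MvPolynomial.aeval (qit P x i) (MvPolynomial.pderiv j P)).natDegree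
      ≤ Δ * (2 * Δ ^ i) :=
    (natDegree_aeval_le _ _ hq _).trans
      (Nat.mul_le_mul_right _ ((totalDegree_pderiv_le P j).trans hP))
  refine (Polynomial.natDegree_pow_le).trans ?_
  calc 2 * (MvPolynomial.aeval (qit P x i) (MvPolynomial.pderiv j P)).natDegree
      ≤ 2 * (Δ * (2 * Δ ^ i)) := Nat.mul_le_mul_left _ hae
    _ = 4 * Δ ^ (i+1) := by ring

lemma gp_eval_neg_iff (P : MvPolynomial (Fin d) ℝ) (x : EuclideanSpace ℝ (Fin d))
    (f : EuclideanSpace ℝ (Fin d) → ℝ)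
    (hf : ∀ y, f y = MvPolynomial.eval (fun j => y j) P) {θ : ℝ} (hθ : 0 < θ) (η : ℝ) (i : ℕ) :
    ((gp P x θ i).eval η < 0 ↔ ‖gradient f (gdIter f x η i)‖ < θ) := by
  have hfe : f = fun y => MvPolynomial.eval (fun j => y j) P := funext hf
  have hgrad : gradient f (gdIter f x η i) = mvGrad P (gdIter f x η i) := by
    rw [hfe]; exact (hasGradientAt_mvpoly P _).gradient
  have hnorm : ‖gradient f (gdIter f x η i)‖
      = Real.sqrt (∑ j, (mvGrad P (gdIter f x η i) j) ^ 2) := by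
    rw [hgrad, EuclideanSpace.norm_eq]
    congr 1
    exact Finset.sum_congr rfl fun j _ => by rw [Real.norm_eq_abs, sq_abs]
  have heval : (gp P x θ i).eval η = (∑ j, (mvGrad P (gdIter f x η i) j) ^ 2) - θ ^ 2 := by
    rw [gp, Polynomial.eval_sub, Polynomial.eval_C, Polynomial.eval_finset_sum]
    congr 1
    refine Finset.sum_congr rfl fun j _ => ?_
    rw [Polynomial.eval_pow, eval_aeval]
    congr 1
    have hcoord : (fun j' => (qit P x i j').eval η) = (fun j' => gdIter f x η i j') :=
      funext (fun j' => qit_eval P x f hf η i j')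
    rw [hcoord]
    rfl
  rw [hnorm, heval, Real.sqrt_lt' hθ]
  constructor <;> intro h <;> linarith

/-! ### Root counting -/

lemma exists_root_of_sign_change (g : Polynomial ℝ) {a b : ℝ} (hab : a ≤ b)
    (h : ¬((g.eval a < 0) ↔ (g.eval b < 0))) :
    g ≠ 0 ∧ ∃ r ∈ Set.Icc a b, g.eval r = 0 := by
  refine ⟨?_, ?_⟩
  · rintro rfl; simp at h
  · have hc : ContinuousOn (fun t => g.eval t) (Set.Icc a b) :=
      (Polynomial.continuous g).continuousOn
    by_cases h1 : g.eval a < 0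
    · have h2 : 0 ≤ g.eval b := by by_contra h3; exact h ⟨fun _ => by linarith, fun _ => h1⟩
      have h0 : (0:ℝ) ∈ Set.Icc (g.eval a) (g.eval b) := ⟨le_of_lt h1, h2⟩
      obtain ⟨r, hr, hr0⟩ := intermediate_value_Icc hab hc h0
      exact ⟨r, hr, hr0⟩
    · have h2 : g.eval b < 0 := by
        by_contra h3; exact h ⟨fun h4 => absurd h4 h1, fun h4 => by linarith⟩
      have h0 : (0:ℝ) ∈ Set.Icc (g.eval b) (g.eval a) := ⟨le_of_lt h2, by linarith⟩
      obtain ⟨r, hr, hr0⟩ := intermediate_value_Icc' hab hc h0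
      exact ⟨r, hr, hr0⟩

lemma card_le_of_signs {ι : Type*} [Fintype ι] (g : ι → Polynomial ℝ) (T : Finset ℝ)
    (h : ∀ a ∈ T, ∀ b ∈ T, a < b → ∃ i, ¬(((g i).eval a < 0) ↔ ((g i).eval b < 0))) :
    T.card ≤ 2 * (∑ i, (g i).natDegree) + 1 := by
  classical
  set R : Finset ℝ := Finset.univ.biUnion (fun i : ι => (g i).roots.toFinset) with hR
  have hRcard : R.card ≤ ∑ i, (g i).natDegree := by
    refine (Finset.card_biUnion_le).trans ?_
    refine Finset.sum_le_sum fun i _ => ?_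
    exact (Multiset.toFinset_card_le _).trans (Polynomial.card_roots' _)
  set L := T.sort (· ≤ ·) with hL
  set k := T.card with hk
  have hlen : L.length = k := Finset.length_sort _
  set t : ℕ → ℝ := fun n => L.getD n 0 with ht
  have hmemT : ∀ n, n < k → t n ∈ T := by
    intro n hn
    rw [ht]
    simp only
    rw [List.getD_eq_getElem _ _ (by omega)]
    exact (Finset.mem_sort _).1 (List.getElem_mem _)
  have hmono : ∀ m n, m < n → n < k → t m < t n := by
    intro m n hmn hn
    have hs : L.Pairwise (· < ·) := T.sortedLT_sort.pairwise
    rw [ht]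
    simp only
    rw [List.getD_eq_getElem _ _ (by omega), List.getD_eq_getElem _ _ (by omega)]
    exact List.pairwise_iff_getElem.1 hs m n (by omega) (by omega) hmn
  have key : ∀ n, n + 1 < k → ∃ p : ℝ × Bool, p.1 ∈ R ∧ t n ≤ p.1 ∧ p.1 ≤ t (n+1) ∧
      (p.2 = true ↔ p.1 = t (n+1)) := by
    intro n hn
    obtain ⟨i, hi⟩ := h (t n) (hmemT n (by omega)) (t (n+1)) (hmemT (n+1) hn)
      (hmono n (n+1) (by omega) hn)
    obtain ⟨hne, r, hr, hr0⟩ := exists_root_of_sign_change (g i) (le_of_lt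
      (hmono n (n+1) (by omega) hn)) hi
    refine ⟨(r, decide (r = t (n+1))), ?_, hr.1, hr.2, by simp⟩
    rw [hR]
    simp only [Finset.mem_biUnion, Finset.mem_univ, Multiset.mem_toFinset]
    exact ⟨i, trivial, (Polynomial.mem_roots hne).2 hr0⟩
  set φ : ℕ → ℝ × Bool := fun n => if hn : n + 1 < k then (key n hn).choose else (0, false)
    with hφ
  have hcard : (Finset.range (k - 1)).card ≤ (R ×ˢ (Finset.univ : Finset Bool)).card := by
    refine Finset.card_le_card_of_injOn φ ?_ ?_
    · intro n hn
      rw [Finset.mem_coe, Finset.mem_range] at hn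
      have hn' : n + 1 < k := by omega
      rw [hφ]; simp only [dif_pos hn']
      obtain ⟨h1, _, _, _⟩ := (key n hn').choose_spec
      simp [Finset.mem_product, h1]
    · have main : ∀ m n, m < n → n < k - 1 → φ m ≠ φ n := by
        intro m n hlt hn hmn
        have hm' : m + 1 < k := by omega
        have hn' : n + 1 < k := by omega
        simp only [hφ, dif_pos hm', dif_pos hn'] at hmn
        obtain ⟨_, hm1, hm2, hm3⟩ := (key m hm').choose_spec
        obtain ⟨_, hn1, hn2, hn3⟩ := (key n hn').choose_spec
        set p := (key m hm').choose
        set q := (key n hn').choose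
        have hr : p.1 = q.1 := by rw [hmn]
        have hb : p.2 = q.2 := by rw [hmn]
        have h1 : t (m+1) ≤ t n := by
          rcases Nat.lt_or_ge (m+1) n with h' | h'
          · exact le_of_lt (hmono _ _ h' (by omega))
          · have he : m + 1 = n := by omega
            rw [he]
        have h2 : p.1 = t (m+1) := by rw [hr] at hm2 ⊢; linarith
        have h3 : p.2 = true := hm3.2 h2
        have h4 : q.1 = t (n+1) := hn3.1 (hb ▸ h3)
        have h5 : t n < t (n+1) := hmono n (n+1) (by omega) hn'
        rw [hr, h4] at h2
        linarith
      intro m hm n hn hmn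
      simp only [Finset.coe_range, Set.mem_Iio] at hm hn
      by_contra hne
      rcases Nat.lt_or_ge m n with hlt | hge
      · exact main m n hlt hn hmn
      · exact main n m (by omega) hm hmn.symm
  have : k - 1 ≤ 2 * R.card := by
    have := hcard
    rw [Finset.card_range, Finset.card_product] at this
    simpa [Finset.card_univ, mul_comm] using this
  omega

/-! ### gdCost only depends on the sign pattern -/

lemma gdCost_congr (H : ℕ) (θ : ℝ) (f : EuclideanSpace ℝ (Fin d) → ℝ)
    (x : EuclideanSpace ℝ (Fin d)) (η η' : ℝ)
    (h : ∀ i, i < H →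
      (‖gradient f (gdIter f x η i)‖ < θ ↔ ‖gradient f (gdIter f x η' i)‖ < θ)) :
    gdCost H θ f x η = gdCost H θ f x η' := by
  unfold gdCost
  congr 1
  ext i
  simp only [Set.mem_union, Set.mem_setOf_eq, Set.mem_singleton_iff]
  refine or_congr ?_ Iff.rfl
  refine and_congr_right fun h1 => and_congr_right fun h2 => ?_
  exact h (i - 1) (by omega)

/-! ### Arithmetic -/

lemma sq_le_two_pow (m : ℕ) : m ^ 2 ≤ 2 ^ (m + 4) := by
  induction m with
  | zero => norm_num
  | succ m ih =>
      have h1 : m < 2 ^ m := Nat.lt_two_pow_self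
      have h2 : 2 ^ m ≤ 2 ^ (m + 4) := Nat.pow_le_pow_right (by omega) (by omega)
      have h3 : 2 ^ (m + 1 + 4) = 2 * 2 ^ (m + 4) := by ring
      have h4 : (m + 1) ^ 2 = m ^ 2 + 2 * m + 1 := by ring
      have h5 : 2 ^ (m + 1) = 2 * 2 ^ m := by ring
      have h6 : 2 ^ (m + 1) ≤ 2 ^ (m + 4) := Nat.pow_le_pow_right (by omega) (by omega)
      omega

lemma final_arith (m H Δ : ℕ) (hm : 1 ≤ m) (hH : 1 ≤ H) (hΔ : 2 ≤ Δ)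
    (hcount : 2 ^ m ≤ 16 * (m * (H * Δ ^ H))) :
    (m : ℝ) ≤ 27 * H * Real.log Δ := by
  set l2 := Real.log 2 with hl2
  set lΔ := Real.log Δ with hlΔ
  have hl2pos : (2:ℝ)/3 < l2 := by
    rw [hl2]; have := Real.log_two_gt_d9; norm_num at this ⊢; linarith
  have hl2le : l2 ≤ lΔ := Real.log_le_log (by norm_num) (by exact_mod_cast hΔ)
  have hlΔpos : (0:ℝ) < lΔ := lt_trans (by norm_num) (lt_of_lt_of_le hl2pos hl2le)
  have hmR : (1:ℝ) ≤ m := by exact_mod_cast hm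
  have hHR : (1:ℝ) ≤ H := by exact_mod_cast hH
  have hA : (m:ℝ) * l2 ≤ 4 * l2 + Real.log m + Real.log H + H * lΔ := by
    have h1 : ((2:ℝ)) ^ m ≤ 16 * ((m:ℝ) * ((H:ℝ) * (Δ:ℝ) ^ H)) := by exact_mod_cast hcount
    have h2 := Real.log_le_log (by positivity) h1
    rw [Real.log_pow] at h2
    rw [Real.log_mul (by norm_num) (by positivity), Real.log_mul (by positivity) (by positivity),
      Real.log_mul (by positivity) (by positivity), Real.log_pow] at h2
    have h16 : Real.log 16 = 4 * l2 := by
      rw [show (16:ℝ) = 2 ^ 4 by norm_num, Real.log_pow]; push_cast; ring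
    rw [h16] at h2
    linarith
  have hB : 2 * Real.log m ≤ ((m:ℝ) + 4) * l2 := by
    have h1 : ((m:ℝ)) ^ 2 ≤ 2 ^ (m + 4) := by exact_mod_cast sq_le_two_pow m
    have h2 := Real.log_le_log (by nlinarith) h1
    rw [Real.log_pow, Real.log_pow] at h2
    push_cast at h2
    linarith
  have hC : Real.log H ≤ (H:ℝ) :=
    le_trans (Real.log_le_sub_one_of_pos (by positivity)) (by linarith)
  have hH2 : (H:ℝ) ≤ 2 * H * lΔ := by nlinarith
  have hmain : (m:ℝ) * l2 ≤ 18 * ((H:ℝ) * lΔ) := by nlinarith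
  nlinarith

end GDPdim

/-- The pseudo-dimension of the class of gradient-descent cost functions
`{ℓ_η : η ∈ ℝ_{≥0}}`, over instances `(x, f)` with `f` a polynomial of degree at most `Δ`,
is at most `C · H · log Δ` for a universal constant `C`. -/
theorem gd_poly_stepsize_pdim :
    ∃ C : ℝ, 0 < C ∧
      ∀ (d H Δ : ℕ), 1 ≤ d → 1 ≤ H → 2 ≤ Δ →
      ∀ θ : ℝ, 0 < θ →
      ∀ S : Finset {z : (EuclideanSpace ℝ (Fin d)) × (EuclideanSpace ℝ (Fin d) → ℝ) //
          IsPolyDeg Δ z.2},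
        PseudoShatters
          {ℓ | ∃ η : ℝ, 0 ≤ η ∧
            ℓ = fun z : {z : (EuclideanSpace ℝ (Fin d)) × (EuclideanSpace ℝ (Fin d) → ℝ) //
                IsPolyDeg Δ z.2} => (gdCost H θ z.1.2 z.1.1 η : ℝ)} S →
        (S.card : ℝ) ≤ C * H * Real.log Δ := by
  classical
  refine ⟨27, by norm_num, ?_⟩
  intro d H Δ hd hH hΔ θ hθ S hsh
  have hlogΔ : (0:ℝ) < Real.log Δ := Real.log_pos (by exact_mod_cast hΔ)
  have hHR : (1:ℝ) ≤ H := by exact_mod_cast hH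
  by_cases hm0 : S.card = 0
  · rw [hm0]; push_cast; positivity
  have hm : 1 ≤ S.card := by omega
  obtain ⟨r, hb⟩ := hsh
  -- step sizes realizing each subset pattern
  have hchoice : ∀ A : Finset {z : (EuclideanSpace ℝ (Fin d)) × (EuclideanSpace ℝ (Fin d) → ℝ) //
      IsPolyDeg Δ z.2}, ∃ η : ℝ, ∀ z ∈ S,
      ((gdCost H θ z.1.2 z.1.1 η : ℝ) > r z ↔ z ∈ A) := by
    intro A
    obtain ⟨ℓ, hℓF, hℓ⟩ := hb (fun z => decide (z ∈ A))
    obtain ⟨η, hη0, rfl⟩ := hℓF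
    exact ⟨η, fun z hz => by simpa using hℓ z hz⟩
  choose e he using hchoice
  -- different subsets of S give different cost behaviour
  have hcostdiff : ∀ A ∈ S.powerset, ∀ B ∈ S.powerset, A ≠ B → ∀ η η' : ℝ,
      (∀ z ∈ S, ((gdCost H θ z.1.2 z.1.1 η : ℝ) > r z ↔ z ∈ A)) →
      (∀ z ∈ S, ((gdCost H θ z.1.2 z.1.1 η' : ℝ) > r z ↔ z ∈ B)) →
      ∃ z ∈ S, gdCost H θ z.1.2 z.1.1 η ≠ gdCost H θ z.1.2 z.1.1 η' := by
    intro A hA B hB hAB η η' hη hη'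
    have hz : ∃ z, ¬(z ∈ A ↔ z ∈ B) := by
      by_contra hno
      push_neg at hno
      exact hAB (Finset.ext fun z => hno z)
    obtain ⟨z, hziff⟩ := hz
    have hzS : z ∈ S := by
      by_cases hA' : z ∈ A
      · exact Finset.mem_of_subset (Finset.mem_powerset.1 hA) hA'
      · by_cases hB' : z ∈ B
        · exact Finset.mem_of_subset (Finset.mem_powerset.1 hB) hB'
        · exact absurd ⟨fun h => absurd h hA', fun h => absurd h hB'⟩ hziff
    refine ⟨z, hzS, fun hceq => ?_⟩
    have h1 := hη z hzS
    have h2 := hη' z hzS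
    rw [hceq] at h1
    exact hziff ((h1.symm.trans h2))
  -- e is injective on the powerset
  have hinj : Set.InjOn e (S.powerset : Set (Finset _)) := by
    intro A hA B hB hAB
    by_contra hne
    obtain ⟨z, hzS, hzc⟩ := hcostdiff A hA B hB hne (e A) (e B) (he A) (he B)
    rw [hAB] at hzc
    exact hzc rfl
  set T : Finset ℝ := S.powerset.image e with hT
  have hTcard : T.card = 2 ^ S.card := by
    rw [hT, Finset.card_image_of_injOn hinj, Finset.card_powerset]
  -- the polynomial family
  set gfam : {z // z ∈ S} × Fin H → Polynomial ℝ :=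
    fun p => GDPdim.gp (p.1.1.2.choose) p.1.1.1.1 θ p.2.1 with hgfam
  have hsigns : ∀ a ∈ T, ∀ b ∈ T, a < b → ∃ p : {z // z ∈ S} × Fin H,
      ¬(((gfam p).eval a < 0) ↔ ((gfam p).eval b < 0)) := by
    intro a ha b hb hab
    rw [hT, Finset.mem_image] at ha hb
    obtain ⟨A, hA, rfl⟩ := ha
    obtain ⟨B, hB, rfl⟩ := hb
    have hne : A ≠ B := fun h => by rw [h] at hab; exact lt_irrefl _ hab
    obtain ⟨z, hzS, hzc⟩ := hcostdiff A hA B hB hne (e A) (e B) (he A) (he B)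
    have hex : ∃ i, i < H ∧ ¬(‖gradient z.1.2 (gdIter z.1.2 z.1.1 (e A) i)‖ < θ ↔
        ‖gradient z.1.2 (gdIter z.1.2 z.1.1 (e B) i)‖ < θ) := by
      by_contra hno
      push_neg at hno
      exact hzc (GDPdim.gdCost_congr H θ z.1.2 z.1.1 (e A) (e B)
        (fun i hi => (hno i hi)))
    obtain ⟨i, hiH, hi⟩ := hex
    refine ⟨(⟨z, hzS⟩, ⟨i, hiH⟩), ?_⟩
    have hP := z.2.choose_spec
    rw [hgfam]
    simp only
    rw [GDPdim.gp_eval_neg_iff z.2.choose z.1.1 z.1.2 hP.2 hθ (e A) i,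
      GDPdim.gp_eval_neg_iff z.2.choose z.1.1 z.1.2 hP.2 hθ (e B) i]
    exact hi
  have hcount := GDPdim.card_le_of_signs gfam T hsigns
  -- degree bound
  have hdeg : ∀ p : {z // z ∈ S} × Fin H, (gfam p).natDegree ≤ 4 * Δ ^ H := by
    intro p
    have hP := p.1.1.2.choose_spec
    refine (GDPdim.gp_deg _ _ θ hΔ hP.1 p.2.1).trans ?_
    have : Δ ^ (p.2.1 + 1) ≤ Δ ^ H := Nat.pow_le_pow_right (by omega) (by omega)
    omega
  have hsum : (∑ p : {z // z ∈ S} × Fin H, (gfam p).natDegree) ≤ (S.card * H) * (4 * Δ ^ H) := by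
    refine le_trans (Finset.sum_le_card_nsmul _ _ _ (fun p _ => hdeg p)) ?_
    rw [smul_eq_mul, Finset.card_univ, Fintype.card_prod, Fintype.card_coe, Fintype.card_fin]
  have hfinal : 2 ^ S.card ≤ 16 * (S.card * (H * Δ ^ H)) := by
    rw [← hTcard]
    have hXpos : 1 ≤ S.card * (H * Δ ^ H) := by
      have h1 : 0 < Δ ^ H := Nat.pow_pos (n := H) (by omega)
      have := Nat.mul_le_mul hm (Nat.mul_le_mul hH h1)
      omega
    have h8 : 2 * ((S.card * H) * (4 * Δ ^ H)) = 8 * (S.card * (H * Δ ^ H)) := by ring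
    omega
  calc ((S.card : ℝ)) ≤ 27 * H * Real.log Δ := GDPdim.final_arith S.card H Δ hm hH hΔ hfinal
    _ = 27 * H * Real.log Δ := rfl
end

section
/- Let f : ℝ^d → ℝ be a real polynomial of degree at most Δ, with Δ ≥ 1, and fix x ∈ ℝ^d. For η ∈ ℝ define the gradient-descent iterates x_1(η) = x and x_{i+1}(η) = x_i(η) − η∇f(x_i(η)). Then for every i ≥ 2 and every coordinate j ∈ {1, …, d}, the map η ↦ (x_i(η))_j is a polynomial in η of degree at most Δ^{i−2}. -/
open MvPolynomial
lemma hasFDerivAt_mveval {d : ℕ} (P : MvPolynomial (Fin d) ℝ) (y : Fin d → ℝ) :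
    HasFDerivAt (fun z : Fin d → ℝ => eval z P)
      (∑ j, eval y (pderiv j P) • (ContinuousLinearMap.proj j : (Fin d → ℝ) →L[ℝ] ℝ)) y := by
  induction P using MvPolynomial.induction_on with
  | C a =>
      simpa [pderiv_C] using hasFDerivAt_const (eval (fun j => y j) (C a : MvPolynomial (Fin d) ℝ)) y
  | add p q hp hq =>
      have hfun : (fun z : Fin d → ℝ => eval z (p + q)) = (fun z => eval z p) + (fun z => eval z q) := by
        ext z; simp
      rw [hfun]
      refine (hp.add hq).congr_fderiv (Eq.symm ?_)
      · rw [← Finset.sum_add_distrib]; congr 1; ext j; simp [add_smul]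
  | mul_X p i hp =>
      have hXi : HasFDerivAt (fun z : Fin d → ℝ => z i)
          (ContinuousLinearMap.proj i : (Fin d → ℝ) →L[ℝ] ℝ) y := (ContinuousLinearMap.proj i : (Fin d → ℝ) →L[ℝ] ℝ).hasFDerivAt
      have := hp.mul hXi
      have hfun : (fun z : Fin d → ℝ => eval z (p * X i)) = (fun z => eval z p) * (fun z : Fin d → ℝ => z i) := by
        ext z; simp
      rw [hfun]
      refine this.congr_fderiv (Eq.symm ?_)
      · rw [Finset.smul_sum]
        have : ∀ j : Fin d, eval y (pderiv j (p * X i)) • (ContinuousLinearMap.proj j : (Fin d → ℝ) →L[ℝ] ℝ)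
            = (y i * eval y (pderiv j p)) • ContinuousLinearMap.proj j
              + (if j = i then eval y p • (ContinuousLinearMap.proj i : (Fin d → ℝ) →L[ℝ] ℝ) else 0) := by
          intro j
          by_cases h : j = i
          · subst h
            simp [pderiv_mul, pderiv_X_self, add_smul, mul_comm, add_comm]
          · simp [pderiv_mul, pderiv_X_of_ne (Ne.symm h), h, mul_comm]
        rw [Finset.sum_congr rfl fun j _ => this j, Finset.sum_add_distrib]
        simp only [Finset.sum_ite_eq', Finset.mem_univ, if_true, smul_smul]
        rw [add_comm]

lemma gradient_mveval {d : ℕ} (P : MvPolynomial (Fin d) ℝ) (f : EuclideanSpace ℝ (Fin d) → ℝ)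
    (hf : ∀ y : EuclideanSpace ℝ (Fin d), f y = eval (fun j => y j) P)
    (y : EuclideanSpace ℝ (Fin d)) :
    gradient f y = (WithLp.equiv 2 (Fin d → ℝ)).symm (fun j => eval (fun k => y k) (pderiv j P)) := by
  set e : EuclideanSpace ℝ (Fin d) ≃L[ℝ] (Fin d → ℝ) :=
    PiLp.continuousLinearEquiv 2 ℝ (fun _ : Fin d => ℝ)
  set g : EuclideanSpace ℝ (Fin d) :=
    (WithLp.equiv 2 (Fin d → ℝ)).symm (fun j => eval (fun k => y k) (pderiv j P))
  have hF : HasFDerivAt f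
      ((∑ j, eval (fun k => y k) (pderiv j P) • (ContinuousLinearMap.proj j : (Fin d → ℝ) →L[ℝ] ℝ)).comp
        (e : EuclideanSpace ℝ (Fin d) →L[ℝ] (Fin d → ℝ))) y := by
    have h1 := (hasFDerivAt_mveval P (e y)).comp y e.hasFDerivAt
    have : f = (fun z : Fin d → ℝ => eval z P) ∘ e := by
      funext z; exact hf z
    rw [this]
    exact h1
  have hG : HasGradientAt f g y := by
    rw [hasGradientAt_iff_hasFDerivAt]
    refine hF.congr_fderiv (Eq.symm ?_)
    ext v
    simp [g, e, InnerProductSpace.toDual_apply_apply, PiLp.inner_apply, RCLike.inner_apply,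
      ContinuousLinearMap.proj_apply, mul_comm]
  exact hG.gradient

lemma totalDegree_pderiv_le {d Δ : ℕ} (P : MvPolynomial (Fin d) ℝ) (hP : P.totalDegree ≤ Δ)
    (i : Fin d) : (pderiv i P).totalDegree ≤ Δ - 1 := by
  conv_lhs => rw [P.as_sum]
  rw [map_sum]
  refine (totalDegree_finset_sum _ _).trans (Finset.sup_le fun s hs => ?_)
  rw [pderiv_monomial]
  by_cases h : s i = 0
  · simp [h]
  · refine (totalDegree_monomial_le _ _).trans ?_
    have hsub : Finsupp.single i 1 ≤ s := by
      intro k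
      rcases eq_or_ne k i with rfl | hk
      · simpa [Finsupp.single_apply] using Nat.one_le_iff_ne_zero.2 h
      · simp [Finsupp.single_apply, hk.symm]
    have hsum : (s - Finsupp.single i 1).sum (fun _ n => n) + 1 = s.sum fun _ n => n := by
      have := Finsupp.sum_add_index' (f := (s - Finsupp.single i 1)) (g := Finsupp.single i 1)
        (h := fun (_ : Fin d) (n : ℕ) => n) (fun _ => rfl) (fun _ _ _ => rfl)
      rw [tsub_add_cancel_of_le hsub] at this
      simp [this, Finsupp.sum_single_index]
    simp only [Finsupp.sum, id_eq] at hsum ⊢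
    have hstot : s.sum (fun _ n => n) ≤ Δ := le_trans (Finset.le_sup (f := fun s => s.sum fun _ n => n) hs) hP
    simp only [Finsupp.sum] at hstot
    omega

lemma eval_aeval_poly {d : ℕ} (Q : MvPolynomial (Fin d) ℝ) (p : Fin d → Polynomial ℝ) (η : ℝ) :
    Polynomial.eval η (MvPolynomial.aeval p Q) = eval (fun j => Polynomial.eval η (p j)) Q := by
  induction Q using MvPolynomial.induction_on with
  | C a => simp
  | add q r hq hr => simp [hq, hr]
  | mul_X q i hq => simp [hq]

/-- For a polynomial objective `f` of degree at most `Δ`, each coordinate of the `i`-th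
gradient-descent iterate is a polynomial in the step size `η` of degree at most `Δ^(i-2)`,
for every `i ≥ 2`. -/
theorem gd_poly_iterate_polynomial_in_stepsize
    {d Δ : ℕ} (hΔ : 1 ≤ Δ) (f : EuclideanSpace ℝ (Fin d) → ℝ) (hf : IsPolyDeg Δ f)
    (x : EuclideanSpace ℝ (Fin d)) :
    ∀ i : ℕ, 2 ≤ i → ∀ j : Fin d,
      ∃ P : Polynomial ℝ, P.natDegree ≤ Δ ^ (i - 2) ∧
        ∀ η : ℝ, gdIter f x η (i - 1) j = Polynomial.eval η P := by
  obtain ⟨P, hPdeg, hfP⟩ := hf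
  have hgrad : ∀ (y : EuclideanSpace ℝ (Fin d)) (j : Fin d),
      gradient f y j = eval (fun k => y k) (pderiv j P) := by
    intro y j
    rw [gradient_mveval P f hfP y]
    rfl
  have hcoord : ∀ (η : ℝ) (n : ℕ) (j : Fin d),
      gdIter f x η (n + 1) j = gdIter f x η n j - η * eval (fun k => gdIter f x η n k) (pderiv j P) := by
    intro η n j
    show (gdIter f x η n - η • gradient f (gdIter f x η n)) j = _
    rw [PiLp.sub_apply, PiLp.smul_apply, hgrad, smul_eq_mul]
  have aux : ∀ k : ℕ, ∃ p : Fin d → Polynomial ℝ, ∀ j : Fin d,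
      (p j).natDegree ≤ Δ ^ k ∧ ∀ η : ℝ, gdIter f x η (k + 1) j = Polynomial.eval η (p j) := by
    intro k
    induction k with
    | zero =>
        refine ⟨fun j => Polynomial.C (x j) -
          Polynomial.C (eval (fun m => x m) (pderiv j P)) * Polynomial.X, fun j => ⟨?_, fun η => ?_⟩⟩
        · refine (Polynomial.natDegree_sub_le _ _).trans ?_
          simp only [Polynomial.natDegree_C, pow_zero]
          refine max_le (by omega) ((Polynomial.natDegree_mul_le).trans ?_)
          simp
        · rw [hcoord η 0 j]
          have h0 : gdIter f x η 0 = x := rfl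
          rw [h0]
          simp only [Polynomial.eval_sub, Polynomial.eval_C, Polynomial.eval_mul, Polynomial.eval_X]
          ring
    | succ k ih =>
        obtain ⟨p, hp⟩ := ih
        refine ⟨fun j => p j - Polynomial.X * MvPolynomial.aeval p (pderiv j P),
          fun j => ⟨?_, fun η => ?_⟩⟩
        · refine (Polynomial.natDegree_sub_le _ _).trans (max_le ?_ ?_)
          · exact (hp j).1.trans (Nat.pow_le_pow_right (by omega) (by omega))
          · refine (Polynomial.natDegree_mul_le).trans ?_
            have h1 := MvPolynomial.aeval_natDegree_le (pderiv j P)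
              (totalDegree_pderiv_le P hPdeg j) p (fun m => (hp m).1)
            have h2 : 1 ≤ Δ ^ k := Nat.one_le_pow _ _ (by omega)
            have h3 : Δ ^ (k + 1) = (Δ - 1) * Δ ^ k + Δ ^ k := by
              rw [pow_succ, mul_comm]
              have : Δ - 1 + 1 = Δ := by omega
              calc Δ * Δ ^ k = (Δ - 1 + 1) * Δ ^ k := by rw [this]
                _ = (Δ - 1) * Δ ^ k + Δ ^ k := by ring
            simp only [Polynomial.natDegree_X]
            omega
        · rw [hcoord η (k + 1) j, (hp j).2 η]
          simp only [Polynomial.eval_sub, Polynomial.eval_mul, Polynomial.eval_X, eval_aeval_poly]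
          have heq : (fun m => gdIter f x η (k + 1) m) = fun m => Polynomial.eval η (p m) :=
            funext fun m => (hp m).2 η
          rw [heq]
  intro i hi j
  obtain ⟨p, hp⟩ := aux (i - 2)
  refine ⟨p j, (hp j).1, fun η => ?_⟩
  have : i - 1 = (i - 2) + 1 := by omega
  rw [this]
  exact (hp j).2 η
end

section
/- Let f : ℝ^d → ℝ be a real polynomial of degree at most Δ, with Δ ≥ 1, and fix x ∈ ℝ^d. For η ∈ ℝ define the gradient-descent iterates x_1(η) = x and x_{i+1}(η) = x_i(η) − η∇f(x_i(η)). Then for every i ≥ 1, the map η ↦ ‖∇f(x_i(η))‖² (squared Euclidean norm of the gradient at the i-th iterate) is a polynomial in η of degree at most 2Δ^{i−1}. -/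
open MvPolynomial in
lemma aux_hasFDerivAt_mvEval {d : ℕ} (P : MvPolynomial (Fin d) ℝ)
    (y : EuclideanSpace ℝ (Fin d)) :
    HasFDerivAt (fun z : EuclideanSpace ℝ (Fin d) => MvPolynomial.eval (fun j => z j) P)
      (∑ j : Fin d, MvPolynomial.eval (fun k => y k) (MvPolynomial.pderiv j P) •
        (EuclideanSpace.proj j : EuclideanSpace ℝ (Fin d) →L[ℝ] ℝ)) y := by
  induction P using MvPolynomial.induction_on with
  | C a => simpa using hasFDerivAt_const a y
  | add p q hp hq =>
      simp only [map_add, add_smul, Finset.sum_add_distrib]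
      exact hp.add hq
  | mul_X p j hp =>
      have hXj : HasFDerivAt (fun z : EuclideanSpace ℝ (Fin d) => z j)
          (EuclideanSpace.proj j : EuclideanSpace ℝ (Fin d) →L[ℝ] ℝ) y := by
        have h0 := ContinuousLinearMap.hasFDerivAt
          (EuclideanSpace.proj j : EuclideanSpace ℝ (Fin d) →L[ℝ] ℝ) (x := y)
        exact h0
      have h := hp.mul hXj
      have hkey : ∀ k : Fin d,
          MvPolynomial.eval (fun k => y k) (pderiv k (p * X j)) =
          MvPolynomial.eval (fun k => y k) (pderiv k p) * y j +
            (if k = j then MvPolynomial.eval (fun k => y k) p else 0) := by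
        intro k
        rcases eq_or_ne k j with rfl | hne
        · simp [pderiv_mul]
          ring
        · simp [pderiv_mul, pderiv_X_of_ne (Ne.symm hne), hne]
          ring
      simp only [map_mul, eval_X]
      refine h.congr_fderiv (Eq.symm ?_)
      rw [Finset.sum_congr rfl fun k _ => by rw [hkey k]]
      simp only [add_smul, Finset.sum_add_distrib, ite_smul, zero_smul,
        Finset.sum_ite_eq', Finset.mem_univ, if_true]
      rw [add_comm]
      congr 1
      rw [Finset.smul_sum]
      exact Finset.sum_congr rfl fun k _ => by rw [smul_smul, mul_comm]

open MvPolynomial in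
lemma aux_gradient_mvEval {d : ℕ} (P : MvPolynomial (Fin d) ℝ)
    (y : EuclideanSpace ℝ (Fin d)) :
    gradient (fun z : EuclideanSpace ℝ (Fin d) => MvPolynomial.eval (fun j => z j) P) y
      = (WithLp.toLp 2 (fun j => MvPolynomial.eval (fun k => y k) (MvPolynomial.pderiv j P)) :
          EuclideanSpace ℝ (Fin d)) := by
  apply HasGradientAt.gradient
  rw [hasGradientAt_iff_hasFDerivAt]
  refine (aux_hasFDerivAt_mvEval P y).congr_fderiv (Eq.symm ?_)
  apply ContinuousLinearMap.ext
  intro v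
  simp [InnerProductSpace.toDual_apply_apply, PiLp.inner_apply, RCLike.inner_apply,
    ContinuousLinearMap.sum_apply, mul_comm]

open MvPolynomial in
lemma aux_natDegree_aeval_le {d : ℕ} (Q : Fin d → Polynomial ℝ) (e : ℕ)
    (hQ : ∀ j, (Q j).natDegree ≤ e) (P : MvPolynomial (Fin d) ℝ) :
    (MvPolynomial.aeval Q P).natDegree ≤ P.totalDegree * e := by
  classical
  rw [MvPolynomial.aeval_def, MvPolynomial.eval₂_eq]
  refine Polynomial.natDegree_sum_le_of_forall_le _ _ fun m hm => ?_
  refine Polynomial.natDegree_mul_le.trans ?_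
  have h1 : (algebraMap ℝ (Polynomial ℝ) (MvPolynomial.coeff m P)).natDegree = 0 :=
    Polynomial.natDegree_C _
  rw [h1, zero_add]
  refine (Polynomial.natDegree_prod_le _ _).trans ?_
  calc ∑ i ∈ m.support, (Q i ^ m i).natDegree
      ≤ ∑ i ∈ m.support, m i * e := by
        refine Finset.sum_le_sum fun i _ => ?_
        exact Polynomial.natDegree_pow_le.trans (Nat.mul_le_mul_left _ (hQ i))
    _ = (m.sum fun _ n => n) * e := by rw [Finsupp.sum, Finset.sum_mul]
    _ ≤ P.totalDegree * e := Nat.mul_le_mul_right _ (MvPolynomial.le_totalDegree hm)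

open MvPolynomial in
lemma aux_eval_aeval {d : ℕ} (Q : Fin d → Polynomial ℝ) (P : MvPolynomial (Fin d) ℝ) (η : ℝ) :
    Polynomial.eval η (MvPolynomial.aeval Q P)
      = MvPolynomial.eval (fun j => Polynomial.eval η (Q j)) P := by
  rw [MvPolynomial.aeval_def, show (Polynomial.eval η (MvPolynomial.eval₂ (algebraMap ℝ _) Q P)) =
        (Polynomial.evalRingHom η) (MvPolynomial.eval₂ (algebraMap ℝ _) Q P) from rfl,
    MvPolynomial.eval₂_comp_left]
  rw [MvPolynomial.eval, MvPolynomial.eval₂Hom]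
  congr 1
  ext a
  simp

/-- Degree bookkeeping sequence. -/
def auxE (Δ : ℕ) : ℕ → ℕ
  | 0 => 0
  | n + 1 => max (auxE Δ n) (1 + (Δ - 1) * auxE Δ n)

open MvPolynomial in
lemma aux_totalDegree_pderiv_le {d Δ : ℕ} (j : Fin d) (P : MvPolynomial (Fin d) ℝ)
    (hP : P.totalDegree ≤ Δ) :
    (MvPolynomial.pderiv j P).totalDegree ≤ Δ - 1 := by
  classical
  conv_lhs => rw [P.as_sum]
  rw [map_sum]
  refine (MvPolynomial.totalDegree_finset_sum _ _).trans (Finset.sup_le fun m hm => ?_)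
  rw [pderiv_monomial]
  rcases Nat.eq_zero_or_pos (m j) with h0 | hpos
  · simp [h0]
  · refine (MvPolynomial.totalDegree_monomial_le _ _).trans ?_
    show ((m - Finsupp.single j 1).sum fun _ n => n) ≤ Δ - 1
    have hms : (m.sum fun _ n => n) ≤ Δ := (MvPolynomial.le_totalDegree hm).trans hP
    have hsum : ((m - Finsupp.single j 1).sum fun _ n => n)
        = ∑ k : Fin d, (m k - Finsupp.single j 1 k) := by
      rw [Finsupp.sum_fintype]
      · exact Finset.sum_congr rfl fun k _ => by rw [Finsupp.tsub_apply]
      · intro _; rfl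
    have hms' : (m.sum fun _ n => n) = ∑ k : Fin d, m k := by
      rw [Finsupp.sum_fintype]; intro _; rfl
    rw [hsum]
    have hle : ∀ k : Fin d, Finsupp.single j 1 k ≤ m k := by
      intro k
      rcases eq_or_ne k j with rfl | hne
      · rw [Finsupp.single_eq_same]; exact hpos
      · simp [Finsupp.single_apply, (Ne.symm hne : j ≠ k)]
    have : ∑ k : Fin d, (m k - Finsupp.single j 1 k)
        = (∑ k : Fin d, m k) - ∑ k : Fin d, Finsupp.single j 1 k := by
      rw [eq_tsub_iff_add_eq_of_le (Finset.sum_le_sum fun k _ => hle k),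
        ← Finset.sum_add_distrib]
      exact Finset.sum_congr rfl fun k _ => Nat.sub_add_cancel (hle k)
    rw [this]
    have hsingle : ∑ k : Fin d, (Finsupp.single j 1 : Fin d →₀ ℕ) k = 1 := by
      simp [Finsupp.single_apply]
    rw [hsingle]
    exact Nat.sub_le_sub_right (hms'.symm.trans_le hms) 1

/-- For a polynomial objective `f` of degree at most `Δ`, the squared norm of the gradient
at the `i`-th gradient-descent iterate is a polynomial in the step size `η` of degree at
most `2Δ^(i-1)`, for every `i ≥ 1`. -/
theorem gd_poly_gradnormsq_polynomial_in_stepsize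
    {d Δ : ℕ} (hΔ : 1 ≤ Δ) (f : EuclideanSpace ℝ (Fin d) → ℝ) (hf : IsPolyDeg Δ f)
    (x : EuclideanSpace ℝ (Fin d)) :
    ∀ i : ℕ, 1 ≤ i →
      ∃ P : Polynomial ℝ, P.natDegree ≤ 2 * Δ ^ (i - 1) ∧
        ∀ η : ℝ, ‖gradient f (gdIter f x η (i - 1))‖ ^ 2 = Polynomial.eval η P := by
  classical
  obtain ⟨P, hPdeg, hPeval⟩ := hf
  have hfeq : f = fun z : EuclideanSpace ℝ (Fin d) => MvPolynomial.eval (fun j => z j) P :=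
    funext hPeval
  have grad_eq : ∀ y : EuclideanSpace ℝ (Fin d),
      gradient f y = (WithLp.toLp 2 (fun j => MvPolynomial.eval (fun k => y k) (MvPolynomial.pderiv j P)) :
        EuclideanSpace ℝ (Fin d)) := by
    intro y; rw [hfeq]; exact aux_gradient_mvEval P y
  -- degree bookkeeping
  let e : ℕ → ℕ := auxE Δ
  have he0 : e 0 = 0 := rfl
  have hes : ∀ n, e (n + 1) = max (e n) (1 + (Δ - 1) * e n) := fun n => rfl
  have he1 : ∀ n, e (n + 1) ≤ Δ ^ n := by
    intro n
    induction n with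
    | zero => rw [hes 0, he0]; simp
    | succ m ih =>
        rw [hes (m + 1)]
        refine max_le (ih.trans (Nat.pow_le_pow_right hΔ (Nat.le_succ m))) ?_
        have h1 : 1 + (Δ - 1) * e (m + 1) ≤ 1 + (Δ - 1) * Δ ^ m :=
          Nat.add_le_add_left (Nat.mul_le_mul_left _ ih) 1
        refine h1.trans ?_
        have hpow : 1 ≤ Δ ^ m := Nat.one_le_pow _ _ hΔ
        have hsub : (Δ - 1) * Δ ^ m + Δ ^ m = Δ ^ (m + 1) := by
          rw [Nat.sub_one_mul, pow_succ']
          exact Nat.sub_add_cancel (Nat.le_mul_of_pos_left _ (by omega))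
        omega
  have he2 : ∀ n, (Δ - 1) * e n ≤ Δ ^ n := by
    intro n
    cases n with
    | zero => simp [he0]
    | succ m =>
        calc (Δ - 1) * e (m + 1) ≤ (Δ - 1) * Δ ^ m := Nat.mul_le_mul_left _ (he1 m)
          _ ≤ Δ * Δ ^ m := Nat.mul_le_mul_right _ (Nat.sub_le _ _)
          _ = Δ ^ (m + 1) := (pow_succ' Δ m).symm
  -- iterates are coordinatewise polynomial in η
  have key : ∀ n : ℕ, ∃ Q : Fin d → Polynomial ℝ, (∀ j, (Q j).natDegree ≤ e n) ∧
      ∀ (η : ℝ) (j : Fin d), gdIter f x η n j = Polynomial.eval η (Q j) := by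
    intro n
    induction n with
    | zero =>
        refine ⟨fun j => Polynomial.C (x j), fun j => ?_, fun η j => ?_⟩
        · simp [he0]
        · simp [gdIter]
    | succ m ih =>
        obtain ⟨Q, hQd, hQe⟩ := ih
        refine ⟨fun j => Q j -
          Polynomial.X * MvPolynomial.aeval Q (MvPolynomial.pderiv j P), fun j => ?_, ?_⟩
        · refine (Polynomial.natDegree_sub_le _ _).trans (max_le ?_ ?_)
          · exact (hQd j).trans (by rw [hes]; exact le_max_left _ _)
          · refine Polynomial.natDegree_mul_le.trans ?_
            rw [hes]
            refine le_trans ?_ (le_max_right _ _)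
            have h2 : (MvPolynomial.aeval Q (MvPolynomial.pderiv j P)).natDegree
                ≤ (Δ - 1) * e m := by
              refine (aux_natDegree_aeval_le Q (e m) hQd _).trans ?_
              exact Nat.mul_le_mul_right _ (aux_totalDegree_pderiv_le j P hPdeg)
            simpa [Polynomial.natDegree_X] using Nat.add_le_add_left h2 1
        · intro η j
          have hstep : gdIter f x η (m + 1) j
              = gdIter f x η m j - η * gradient f (gdIter f x η m) j := by
            show (gdIter f x η m - η • gradient f (gdIter f x η m)) j = _
            simp [PiLp.sub_apply, PiLp.smul_apply]
          rw [hstep, grad_eq]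
          simp only [PiLp.toLp_apply]
          have hfun : (fun k => gdIter f x η m k) = fun k => Polynomial.eval η (Q k) :=
            funext fun k => hQe η k
          have : MvPolynomial.eval (fun k => gdIter f x η m k) (MvPolynomial.pderiv j P)
              = Polynomial.eval η (MvPolynomial.aeval Q (MvPolynomial.pderiv j P)) := by
            rw [aux_eval_aeval, hfun]
          simp only [Polynomial.eval_sub, Polynomial.eval_mul, Polynomial.eval_X]
          rw [hQe η j, this]
  intro i hi
  obtain ⟨n, rfl⟩ : ∃ n, i = n + 1 := ⟨i - 1, (Nat.succ_pred_eq_of_pos hi).symm⟩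
  simp only [Nat.add_sub_cancel]
  obtain ⟨Q, hQd, hQe⟩ := key n
  refine ⟨∑ j : Fin d, (MvPolynomial.aeval Q (MvPolynomial.pderiv j P)) ^ 2, ?_, ?_⟩
  · refine Polynomial.natDegree_sum_le_of_forall_le _ _ fun j _ => ?_
    refine Polynomial.natDegree_pow_le.trans ?_
    refine Nat.mul_le_mul_left 2 ?_
    refine (aux_natDegree_aeval_le Q (e n) hQd _).trans ?_
    exact le_trans (Nat.mul_le_mul_right _ (aux_totalDegree_pderiv_le j P hPdeg)) (he2 n)
  · intro η
    have hnorm : ‖gradient f (gdIter f x η n)‖ ^ 2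
        = ∑ j : Fin d, (gradient f (gdIter f x η n) j) ^ 2 := by
      rw [← real_inner_self_eq_norm_sq]
      rw [PiLp.inner_apply]
      exact Finset.sum_congr rfl fun j _ => by simp [RCLike.inner_apply, sq]
    rw [hnorm, Polynomial.eval_finset_sum]
    refine Finset.sum_congr rfl fun j _ => ?_
    rw [grad_eq]
    simp only [PiLp.toLp_apply]
    have hfun : (fun k => gdIter f x η n k) = fun k => Polynomial.eval η (Q k) :=
      funext fun k => hQe η k
    have : MvPolynomial.eval (fun k => gdIter f x η n k) (MvPolynomial.pderiv j P)
        = Polynomial.eval η (MvPolynomial.aeval Q (MvPolynomial.pderiv j P)) := by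
      rw [aux_eval_aeval, hfun]
    rw [Polynomial.eval_pow, ← this]
end

section
/- Let f : ℝ^d → ℝ be a real polynomial of degree at most Δ, with Δ ≥ 1, fix x ∈ ℝ^d and θ > 0, and for η ∈ ℝ define the gradient-descent iterates x_1(η) = x and x_{i+1}(η) = x_i(η) − η∇f(x_i(η)). Then for every i ≥ 1, the set {η ∈ ℝ : ‖∇f(x_i(η))‖² < θ²} is a union of at most Δ^{i−1} + 1 open intervals (possibly unbounded). -/
open Polynomial

namespace GDAux



lemma totalDegree_pderiv_le {d : ℕ} (P : MvPolynomial (Fin d) ℝ) (j : Fin d) {Δ : ℕ}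
    (hΔ : 1 ≤ Δ) (hP : P.totalDegree ≤ Δ) :
    (MvPolynomial.pderiv j P).totalDegree ≤ Δ - 1 := by
  conv_lhs => rw [← MvPolynomial.support_sum_monomial_coeff P]
  rw [map_sum]
  refine le_trans (MvPolynomial.totalDegree_finset_sum _ _) (Finset.sup_le ?_)
  intro m hm
  rw [MvPolynomial.pderiv_monomial]
  by_cases hc : MvPolynomial.coeff m P * (m j : ℝ) = 0
  · rw [hc, MvPolynomial.monomial_zero]; simp
  · have hmj : 1 ≤ m j := by
      rcases Nat.eq_zero_or_pos (m j) with h | h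
      · exfalso; apply hc; rw [h]; simp
      · exact h
    rw [MvPolynomial.totalDegree_monomial _ hc]
    have hsum : m.sum (fun _ e => e) ≤ Δ := le_trans (MvPolynomial.le_totalDegree hm) hP
    have hsingle : (Finsupp.single j 1 : Fin d →₀ ℕ) ≤ m := by
      rw [Finsupp.single_le_iff]; exact hmj
    have hadd : (m - Finsupp.single j 1) + Finsupp.single j 1 = m :=
      tsub_add_cancel_of_le hsingle
    have : (m - Finsupp.single j 1).sum (fun _ e => e) + 1 = m.sum (fun _ e => e) := by
      conv_rhs => rw [← hadd]
      rw [Finsupp.sum_add_index' (fun _ => rfl) (fun _ _ _ => rfl)]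
      simp [Finsupp.sum_single_index]
    omega

lemma natDegree_mv_aeval_le {d : ℕ} (q : Fin d → ℝ[X]) {E : ℕ}
    (hq : ∀ j, (q j).natDegree ≤ E) (Q : MvPolynomial (Fin d) ℝ) :
    (MvPolynomial.aeval q Q).natDegree ≤ Q.totalDegree * E := by
  rw [MvPolynomial.aeval_def, MvPolynomial.eval₂_eq]
  refine natDegree_sum_le_of_forall_le _ _ ?_
  intro m hm
  refine le_trans (natDegree_mul_le) ?_
  have h1 : (algebraMap ℝ ℝ[X] (MvPolynomial.coeff m Q)).natDegree = 0 := natDegree_C _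
  rw [h1, zero_add]
  refine le_trans (natDegree_prod_le _ _) ?_
  have h2 : ∀ i ∈ m.support, (q i ^ m i).natDegree ≤ m i * E := by
    intro i _
    exact le_trans (natDegree_pow_le) (Nat.mul_le_mul_left _ (hq i))
  refine le_trans (Finset.sum_le_sum h2) ?_
  rw [← Finset.sum_mul]
  exact Nat.mul_le_mul_right _ (MvPolynomial.le_totalDegree hm)

lemma eval_mv_aeval {d : ℕ} (q : Fin d → ℝ[X]) (Q : MvPolynomial (Fin d) ℝ) (η : ℝ) :
    (MvPolynomial.aeval q Q).eval η = MvPolynomial.eval (fun j => (q j).eval η) Q := by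
  rw [MvPolynomial.aeval_def]
  have := MvPolynomial.eval₂_comp_left (Polynomial.evalRingHom η)
    (algebraMap ℝ ℝ[X]) q Q
  simp only [Polynomial.coe_evalRingHom] at this
  rw [this, MvPolynomial.eval, MvPolynomial.coe_eval₂Hom]
  congr 1
  ext a
  simp



lemma hasFDerivAt_mv {d : ℕ} (P : MvPolynomial (Fin d) ℝ) (y : EuclideanSpace ℝ (Fin d)) :
    HasFDerivAt (fun z : EuclideanSpace ℝ (Fin d) => MvPolynomial.eval (fun i => z i) P)
      (∑ j, MvPolynomial.eval (fun i => y i) (MvPolynomial.pderiv j P) •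
        (EuclideanSpace.proj j : EuclideanSpace ℝ (Fin d) →L[ℝ] ℝ)) y := by
  induction P using MvPolynomial.induction_on with
  | C a =>
    simp only [MvPolynomial.eval_C, MvPolynomial.pderiv_C, map_zero, zero_smul,
      Finset.sum_const_zero]
    exact hasFDerivAt_const (𝕜 := ℝ) a y
  | add p q hp hq =>
    have h := hp.add hq
    simp only [MvPolynomial.eval_add] at h ⊢
    refine h.congr_fderiv (Eq.symm ?_)
    simp [map_add, add_smul, Finset.sum_add_distrib]
  | mul_X p i hp =>
    have hproj : HasFDerivAt (fun z : EuclideanSpace ℝ (Fin d) => z i)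
        (EuclideanSpace.proj i : EuclideanSpace ℝ (Fin d) →L[ℝ] ℝ) y := by
      simpa using (EuclideanSpace.proj (𝕜 := ℝ) (ι := Fin d) i).hasFDerivAt (x := y)
    have hm := hp.mul hproj
    simp only [MvPolynomial.eval_mul, MvPolynomial.eval_X] at hm ⊢
    have key : (∑ j, MvPolynomial.eval (fun i' => y i')
          (MvPolynomial.pderiv j (p * MvPolynomial.X i)) •
          (EuclideanSpace.proj j : EuclideanSpace ℝ (Fin d) →L[ℝ] ℝ))
        = MvPolynomial.eval (fun i' => y i') p •
            (EuclideanSpace.proj i : EuclideanSpace ℝ (Fin d) →L[ℝ] ℝ)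
          + (y i) • ∑ j, MvPolynomial.eval (fun i' => y i') (MvPolynomial.pderiv j p) •
            (EuclideanSpace.proj j : EuclideanSpace ℝ (Fin d) →L[ℝ] ℝ) := by
      have hterm : ∀ j : Fin d, MvPolynomial.eval (fun i' => y i')
          (MvPolynomial.pderiv j (p * MvPolynomial.X i))
          = MvPolynomial.eval (fun i' => y i') (MvPolynomial.pderiv j p) * y i
            + (if j = i then MvPolynomial.eval (fun i' => y i') p else 0) := by
        intro j
        rw [MvPolynomial.pderiv_mul, map_add, MvPolynomial.eval_mul, MvPolynomial.eval_mul,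
          MvPolynomial.eval_X]
        by_cases h : j = i
        · subst h; simp [MvPolynomial.pderiv_X_self]
        · rw [MvPolynomial.pderiv_X_of_ne (fun hc => h hc.symm)]
          simp [h]
      ext z
      simp only [ContinuousLinearMap.sum_apply, ContinuousLinearMap.smul_apply,
        ContinuousLinearMap.add_apply, PiLp.proj_apply, smul_eq_mul, hterm, add_mul,
        ite_mul, zero_mul, Finset.sum_add_distrib, Finset.sum_ite_eq', Finset.mem_univ,
        if_true, Finset.mul_sum]
      rw [add_comm]
      congr 1
      exact Finset.sum_congr rfl fun j _ => by ring
    rw [key]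
    exact hm

lemma gradient_mv {d : ℕ} (P : MvPolynomial (Fin d) ℝ) (f : EuclideanSpace ℝ (Fin d) → ℝ)
    (hfP : ∀ y, f y = MvPolynomial.eval (fun j => y j) P) (y : EuclideanSpace ℝ (Fin d)) :
    gradient f y = (WithLp.equiv 2 (∀ _ : Fin d, ℝ)).symm
      (fun j => MvPolynomial.eval (fun i => y i) (MvPolynomial.pderiv j P)) := by
  have hf : f = fun z : EuclideanSpace ℝ (Fin d) => MvPolynomial.eval (fun i => z i) P :=
    funext hfP
  subst hf
  refine HasGradientAt.gradient ?_
  rw [hasGradientAt_iff_hasFDerivAt]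
  have h := hasFDerivAt_mv P y
  refine h.congr_fderiv (Eq.symm ?_)
  ext z
  rw [InnerProductSpace.toDual_apply_apply, PiLp.inner_apply]
  simp only [ContinuousLinearMap.sum_apply, ContinuousLinearMap.smul_apply, PiLp.proj_apply,
    smul_eq_mul, RCLike.inner_apply, starRingEnd_apply, star_trivial,
    WithLp.equiv_symm_apply, PiLp.toLp_apply]
  exact Finset.sum_congr rfl fun j _ => mul_comm _ _
def degE (Δ : ℕ) : ℕ → ℕ
  | 0 => 0
  | n + 1 => max (degE Δ n) (1 + (Δ - 1) * degE Δ n)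

lemma degE_bound {Δ : ℕ} (hΔ : 1 ≤ Δ) : ∀ n, (Δ - 1) * degE Δ n + 1 ≤ Δ ^ n := by
  intro n
  induction n with
  | zero => simp [degE]
  | succ n ih =>
    rcases eq_or_lt_of_le hΔ with h1 | h2
    · have : Δ - 1 = 0 := by omega
      simp [this]
      exact Nat.one_le_pow _ _ (by omega)
    · have hmax : degE Δ (n + 1) = 1 + (Δ - 1) * degE Δ n := by
        rw [degE]
        refine max_eq_right ?_
        have : degE Δ n ≤ (Δ - 1) * degE Δ n := Nat.le_mul_of_pos_left _ (by omega)
        omega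
      rw [hmax, pow_succ]
      have h3 : (Δ - 1) * (1 + (Δ - 1) * degE Δ n) + 1
          = (Δ - 1) * (Δ - 1) * degE Δ n + Δ := by
        have : 1 ≤ Δ := hΔ
        cases Δ with
        | zero => omega
        | succ m => ring_nf; omega
      rw [h3]
      calc (Δ - 1) * (Δ - 1) * degE Δ n + Δ
          ≤ Δ * (Δ - 1) * degE Δ n + Δ := by
            have := Nat.mul_le_mul_right (degE Δ n)
              (Nat.mul_le_mul_right (Δ - 1) (Nat.sub_le Δ 1))
            omega
        _ = Δ * ((Δ - 1) * degE Δ n + 1) := by ring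
        _ ≤ Δ * Δ ^ n := Nat.mul_le_mul_left _ ih
        _ = Δ ^ n * Δ := Nat.mul_comm _ _

lemma iter_repr {d Δ : ℕ} (hΔ : 1 ≤ Δ) (P : MvPolynomial (Fin d) ℝ) (hP : P.totalDegree ≤ Δ)
    (f : EuclideanSpace ℝ (Fin d) → ℝ)
    (hfP : ∀ y, f y = MvPolynomial.eval (fun j => y j) P)
    (x : EuclideanSpace ℝ (Fin d)) :
    ∀ n : ℕ, ∃ q : Fin d → ℝ[X], (∀ j, (q j).natDegree ≤ degE Δ n) ∧
      ∀ η j, gdIter f x η n j = (q j).eval η := by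
  intro n
  induction n with
  | zero =>
    exact ⟨fun j => Polynomial.C (x j), fun j => by simp,
      fun η j => by simp [gdIter]⟩
  | succ n ih =>
    obtain ⟨q, hq, hqe⟩ := ih
    refine ⟨fun j => q j - Polynomial.X * MvPolynomial.aeval q (MvPolynomial.pderiv j P),
      ?_, ?_⟩
    · intro j
      refine le_trans (natDegree_sub_le _ _) ?_
      rw [degE]
      refine max_le (le_trans (hq j) (le_max_left _ _)) ?_
      refine le_trans (le_trans natDegree_mul_le ?_) (le_max_right _ _)
      have h1 : (Polynomial.X : ℝ[X]).natDegree = 1 := natDegree_X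
      have h2 : (MvPolynomial.aeval q (MvPolynomial.pderiv j P)).natDegree
          ≤ (Δ - 1) * degE Δ n := by
        refine le_trans (natDegree_mv_aeval_le q hq _) ?_
        exact Nat.mul_le_mul_right _ (totalDegree_pderiv_le P j hΔ hP)
      omega
    · intro η j
      have hrec : gdIter f x η (n + 1)
          = gdIter f x η n - η • gradient f (gdIter f x η n) := rfl
      rw [hrec]
      have hg := gradient_mv P f hfP (gdIter f x η n)
      have hco : (fun i => gdIter f x η n i) = fun i => (q i).eval η :=
        funext fun i => hqe η i
      have : (gdIter f x η n - η • gradient f (gdIter f x η n)) j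
          = gdIter f x η n j - η * (gradient f (gdIter f x η n)) j := rfl
      rw [this, hg, hco, hqe η j]
      change eval η (q j) - η * MvPolynomial.eval (fun i => eval η (q i)) (MvPolynomial.pderiv j P) = _
      rw [← eval_mv_aeval]
      simp


lemma sublevel_union_intervals (p : ℝ[X]) (hp : p ≠ 0) (N : ℕ) (hdeg : p.natDegree ≤ 2 * N) :
    ∃ S : Fin (N + 2) → Set ℝ, (∀ m, IsOpen (S m) ∧ IsPreconnected (S m)) ∧
      {η : ℝ | p.eval η < 0} = ⋃ m, S m := by
  classical
  set R : Finset ℝ := p.roots.toFinset with hR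
  set k : ℕ := R.card with hk
  set ρ : Fin k → ℝ := fun i => ((R.orderIsoOfFin rfl) i : ℝ) with hρ
  have hρmono : StrictMono ρ := fun a b hab =>
    Subtype.coe_lt_coe.2 ((R.orderIsoOfFin rfl).lt_iff_lt.2 hab)
  have hρmem : ∀ i, ρ i ∈ R := fun i => ((R.orderIsoOfFin rfl) i).2
  have hρroot : ∀ i, p.IsRoot (ρ i) := fun i => by
    have h := hρmem i
    rw [hR, Multiset.mem_toFinset, Polynomial.mem_roots hp] at h
    exact h
  have hRsurj : ∀ r ∈ R, ∃ i, ρ i = r := fun r hr =>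
    ⟨(R.orderIsoOfFin rfl).symm ⟨r, hr⟩,
      congrArg Subtype.val ((R.orderIsoOfFin rfl).apply_symm_apply ⟨r, hr⟩)⟩
  set Sint : Fin (k + 1) → Set ℝ := fun j =>
    {y | (∀ i : Fin k, (i : ℕ) < (j : ℕ) → ρ i < y) ∧
      (∀ i : Fin k, (j : ℕ) ≤ (i : ℕ) → y < ρ i)} with hSint
  have hSrepr : ∀ j, Sint j = ⋂ i : Fin k,
      (if (i : ℕ) < (j : ℕ) then Set.Ioi (ρ i) else Set.Iio (ρ i)) := by
    intro j
    ext y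
    simp only [Set.mem_iInter, hSint, Set.mem_setOf_eq]
    constructor
    · rintro ⟨h1, h2⟩ i
      split_ifs with h
      · exact h1 i h
      · exact h2 i (by omega)
    · intro h
      refine ⟨fun i hi => ?_, fun i hi => ?_⟩
      · have h2 := h i; rw [if_pos hi] at h2; exact h2
      · have h2 := h i; rw [if_neg (by omega)] at h2; exact h2
  have hSopen : ∀ j, IsOpen (Sint j) := by
    intro j; rw [hSrepr]
    exact isOpen_iInter_of_finite fun i => by split_ifs; exacts [isOpen_Ioi, isOpen_Iio]
  have hSconv : ∀ j, Convex ℝ (Sint j) := by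
    intro j; rw [hSrepr]
    exact convex_iInter fun i => by split_ifs; exacts [convex_Ioi _, convex_Iio _]
  have hSnoroot : ∀ j y, y ∈ Sint j → ¬ p.IsRoot y := by
    intro j y hy hroot
    have hyR : y ∈ R := by
      rw [hR, Multiset.mem_toFinset, Polynomial.mem_roots hp]; exact hroot
    obtain ⟨i, hi⟩ := hRsurj y hyR
    rcases lt_or_ge (i : ℕ) (j : ℕ) with h | h
    · exact absurd (hy.1 i h) (by rw [hi]; exact lt_irrefl y)
    · exact absurd (hy.2 i h) (by rw [hi]; exact lt_irrefl y)
  have hcont : ∀ a b : ℝ, ContinuousOn (fun z => p.eval z) (Set.Icc a b) :=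
    fun a b => (Polynomial.continuous p).continuousOn
  have hsign : ∀ j a b, a ∈ Sint j → b ∈ Sint j → p.eval a < 0 → p.eval b < 0 := by
    intro j a b ha hb hpa
    by_contra hpb
    push_neg at hpb
    rcases eq_or_lt_of_le hpb with heq | hlt
    · exact hSnoroot j b hb heq.symm
    have hmid : ∀ z, a < z ∨ b < z → z < a ∨ z < b → z ∈ Sint j := by
      intro z h1 h2
      constructor
      · intro i hi
        rcases h1 with h | h
        · exact lt_trans (ha.1 i hi) h
        · exact lt_trans (hb.1 i hi) h
      · intro i hi
        rcases h2 with h | h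
        · exact lt_trans h (ha.2 i hi)
        · exact lt_trans h (hb.2 i hi)
    rcases lt_trichotomy a b with hab | hab | hab
    · have h0 : (0 : ℝ) ∈ Set.Ioo (p.eval a) (p.eval b) := ⟨hpa, hlt⟩
      obtain ⟨z, hz, hz0⟩ := intermediate_value_Ioo (le_of_lt hab) (hcont a b) h0
      exact hSnoroot j z (hmid z (Or.inl hz.1) (Or.inr hz.2)) hz0
    · rw [hab] at hpa; linarith
    · have h0 : (0 : ℝ) ∈ Set.Ioo (p.eval a) (p.eval b) := ⟨hpa, hlt⟩
      obtain ⟨z, hz, hz0⟩ := intermediate_value_Ioo' (le_of_lt hab) (hcont b a) h0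
      exact hSnoroot j z (hmid z (Or.inr hz.1) (Or.inl hz.2)) hz0
  have hmem : ∀ y : ℝ, p.eval y < 0 → ∃ j : Fin (k + 1), y ∈ Sint j := by
    intro y hy
    have hynr : ¬ p.IsRoot y := fun h => by rw [Polynomial.IsRoot] at h; linarith
    set A : Finset (Fin k) := Finset.univ.filter (fun i => ρ i < y) with hA
    have hcard : A.card ≤ k := by
      calc A.card ≤ (Finset.univ : Finset (Fin k)).card := Finset.card_filter_le _ _
        _ = k := by simp
    have hdc : ∀ i i' : Fin k, i ≤ i' → i' ∈ A → i ∈ A := by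
      intro i i' hii hi'
      rw [hA, Finset.mem_filter] at hi' ⊢
      exact ⟨Finset.mem_univ _, lt_of_le_of_lt (hρmono.monotone hii) hi'.2⟩
    have claim : ∀ i : Fin k, i ∈ A ↔ (i : ℕ) < A.card := by
      intro i
      constructor
      · intro hi
        have hsub : Finset.Iic i ⊆ A := fun i' hi' =>
          hdc i' i (Finset.mem_Iic.1 hi') hi
        have h2 := Finset.card_le_card hsub
        rw [Fin.card_Iic] at h2
        omega
      · intro hi
        by_contra hni
        have hsub : A ⊆ Finset.Iio i := by
          intro i' hi'
          rw [Finset.mem_Iio]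
          by_contra hge
          exact hni (hdc i i' (le_of_not_gt hge) hi')
        have h2 := Finset.card_le_card hsub
        rw [Fin.card_Iio] at h2
        omega
    refine ⟨⟨A.card, Nat.lt_succ_of_le hcard⟩, fun i hi => ?_, fun i hi => ?_⟩
    · have h2 : i ∈ A := (claim i).2 hi
      rw [hA, Finset.mem_filter] at h2
      exact h2.2
    · have hiA : i ∉ A := fun h => by
        have h3 := (claim i).1 h
        have hi' : A.card ≤ (i : ℕ) := hi
        omega
      rw [hA, Finset.mem_filter] at hiA
      push_neg at hiA
      have hle := hiA (Finset.mem_univ _)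
      rcases eq_or_lt_of_le hle with heq | hlt
      · exact absurd (by rw [heq]; exact hρroot i) hynr
      · exact hlt
  set T : Finset (Fin (k + 1)) :=
    Finset.univ.filter (fun j => ∃ y ∈ Sint j, p.eval y < 0) with hT
  have hU : {η : ℝ | p.eval η < 0} = ⋃ j ∈ T, Sint j := by
    ext y
    simp only [Set.mem_setOf_eq, Set.mem_iUnion, exists_prop]
    constructor
    · intro hy
      obtain ⟨j, hj⟩ := hmem y hy
      exact ⟨j, Finset.mem_filter.2 ⟨Finset.mem_univ _, ⟨y, hj, hy⟩⟩, hj⟩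
    · rintro ⟨j, hjT, hyj⟩
      obtain ⟨w, hw, hw0⟩ := (Finset.mem_filter.1 hjT).2
      exact hsign j w y hw hyj hw0
  -- multiplicity ≥ 2 at interior endpoints shared by two active intervals
  have hmult2 : ∀ (jn : ℕ) (hj0 : 0 < jn) (hjk : jn < k),
      (⟨jn, by omega⟩ : Fin (k + 1)) ∈ T →
      (⟨jn - 1, by omega⟩ : Fin (k + 1)) ∈ T →
      2 ≤ p.rootMultiplicity (ρ ⟨jn - 1, by omega⟩) := by
    intro jn hj0 hjk hjT hprevT
    have hj1k : jn - 1 < k := by omega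
    have hcu : ρ ⟨jn - 1, hj1k⟩ < ρ ⟨jn, hjk⟩ :=
      hρmono (show (⟨jn - 1, hj1k⟩ : Fin k) < ⟨jn, hjk⟩ from by
        rw [Fin.mk_lt_mk]; omega)
    have hlb : ∃ l : ℝ, l < ρ ⟨jn - 1, hj1k⟩ ∧ ∀ y, l < y → y < ρ ⟨jn - 1, hj1k⟩ →
        y ∈ Sint ⟨jn - 1, by omega⟩ := by
      by_cases h0 : jn - 1 = 0
      · refine ⟨ρ ⟨jn - 1, hj1k⟩ - 1, by linarith, fun y hy1 hy2 =>
          ⟨fun i hi => ?_, fun i hi => ?_⟩⟩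
        · exact absurd (show (i : ℕ) < jn - 1 from hi) (by omega)
        · have hi' : jn - 1 ≤ (i : ℕ) := hi
          have h2 : ρ ⟨jn - 1, hj1k⟩ ≤ ρ i := hρmono.monotone
            (show jn - 1 ≤ (i : ℕ) from hi')
          linarith
      · have hj2k : jn - 2 < k := by omega
        refine ⟨ρ ⟨jn - 2, hj2k⟩,
          hρmono (show (⟨jn - 2, hj2k⟩ : Fin k) < ⟨jn - 1, hj1k⟩ from by
            rw [Fin.mk_lt_mk]; omega),
          fun y hy1 hy2 => ⟨fun i hi => ?_, fun i hi => ?_⟩⟩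
        · have hi' : (i : ℕ) < jn - 1 := hi
          have h2 : ρ i ≤ ρ ⟨jn - 2, hj2k⟩ := hρmono.monotone
            (show (i : ℕ) ≤ jn - 2 by omega)
          linarith
        · have hi' : jn - 1 ≤ (i : ℕ) := hi
          have h2 : ρ ⟨jn - 1, hj1k⟩ ≤ ρ i := hρmono.monotone
            (show jn - 1 ≤ (i : ℕ) from hi')
          linarith
    obtain ⟨l, hl, hleft⟩ := hlb
    have hright : ∀ y, ρ ⟨jn - 1, hj1k⟩ < y → y < ρ ⟨jn, hjk⟩ →
        y ∈ Sint ⟨jn, by omega⟩ := by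
      intro y hy1 hy2
      refine ⟨fun i hi => ?_, fun i hi => ?_⟩
      · have hi' : (i : ℕ) < jn := hi
        have h2 : ρ i ≤ ρ ⟨jn - 1, hj1k⟩ := hρmono.monotone
          (show (i : ℕ) ≤ jn - 1 by omega)
        linarith
      · have hi' : jn ≤ (i : ℕ) := hi
        have h2 : ρ ⟨jn, hjk⟩ ≤ ρ i := hρmono.monotone
          (show jn ≤ (i : ℕ) from hi')
        linarith
    obtain ⟨wp, hwp, hwp0⟩ := (Finset.mem_filter.1 hprevT).2
    obtain ⟨wj, hwj, hwj0⟩ := (Finset.mem_filter.1 hjT).2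
    have hloc : IsLocalMax (fun z => p.eval z) (ρ ⟨jn - 1, hj1k⟩) := by
      have hIoo : Set.Ioo l (ρ ⟨jn, hjk⟩) ∈ nhds (ρ ⟨jn - 1, hj1k⟩) :=
        Ioo_mem_nhds hl hcu
      filter_upwards [hIoo] with y hy
      have hpc : p.eval (ρ ⟨jn - 1, hj1k⟩) = 0 := hρroot ⟨jn - 1, hj1k⟩
      show p.eval y ≤ p.eval (ρ ⟨jn - 1, hj1k⟩)
      rw [hpc]
      rcases lt_trichotomy y (ρ ⟨jn - 1, hj1k⟩) with h | h | h
      · exact le_of_lt (hsign _ wp y hwp (hleft y hy.1 h) hwp0)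
      · rw [h, hpc]
      · exact le_of_lt (hsign _ wj y hwj (hright y h hy.2) hwj0)
    have hder : deriv (fun z => p.eval z) (ρ ⟨jn - 1, hj1k⟩) = 0 := hloc.deriv_eq_zero
    rw [Polynomial.deriv] at hder
    have hdne : p.derivative ≠ 0 := by
      intro h0
      have h1 : p.natDegree = 0 := natDegree_eq_zero_of_derivative_eq_zero h0
      obtain ⟨a, ha⟩ := Polynomial.natDegree_eq_zero.1 h1
      have h2 : p.eval (ρ ⟨jn - 1, hj1k⟩) = 0 := hρroot ⟨jn - 1, hj1k⟩
      rw [← ha, Polynomial.eval_C] at h2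
      exact hp (by rw [← ha, h2, map_zero])
    have h1 : 0 < p.derivative.rootMultiplicity (ρ ⟨jn - 1, hj1k⟩) :=
      (Polynomial.rootMultiplicity_pos hdne).2 hder
    have h2 := Polynomial.derivative_rootMultiplicity_of_root (hρroot ⟨jn - 1, hj1k⟩)
    have h3 : 0 < p.rootMultiplicity (ρ ⟨jn - 1, hj1k⟩) :=
      (Polynomial.rootMultiplicity_pos hp).2 (hρroot _)
    show 2 ≤ p.rootMultiplicity (ρ ⟨jn - 1, hj1k⟩)
    omega
  -- counting active intervals
  set Tb : Finset (Fin (k + 1)) :=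
    T.filter (fun j => 0 < (j : ℕ) ∧ (j : ℕ) < k) with hTbdef
  have hTbN : Tb.card ≤ N := by
    set ρf : ℕ → ℝ := fun m => if h : m < k then ρ ⟨m, h⟩ else 0 with hρf
    have hρfinj : ∀ m m', m < k → m' < k → ρf m = ρf m' → m = m' := by
      intro m m' hm hm' heq
      rw [hρf] at heq
      simp only [dif_pos hm, dif_pos hm'] at heq
      exact congrArg Fin.val (hρmono.injective heq)
    set F : Fin (k + 1) × ℕ → (_ : ℝ) × ℕ := fun jc =>
      if jc.2 = 0 then ⟨ρf (jc.1 : ℕ), 0⟩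
      else ⟨ρf ((jc.1 : ℕ) - 1),
        if ∃ j' : Fin (k + 1), (j' : ℕ) = (jc.1 : ℕ) - 1 ∧ j' ∈ T then 1 else 0⟩ with hF
    have hF0 : ∀ jj : Fin (k + 1), F (jj, 0) = ⟨ρf (jj : ℕ), 0⟩ := fun _ => rfl
    have hF1 : ∀ jj : Fin (k + 1), F (jj, 1) = ⟨ρf ((jj : ℕ) - 1),
        if ∃ j'' : Fin (k + 1), (j'' : ℕ) = (jj : ℕ) - 1 ∧ j'' ∈ T then 1 else 0⟩ :=
      fun _ => rfl
    set dom : Finset (Fin (k + 1) × ℕ) := Tb ×ˢ ({0, 1} : Finset ℕ) with hdom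
    set target : Finset ((_ : ℝ) × ℕ) :=
      R.sigma (fun r => Finset.range (p.rootMultiplicity r)) with htarget
    have hmaps : ∀ jc ∈ dom, F jc ∈ target := by
      rintro ⟨j, c⟩ hjc
      rw [hdom, Finset.mem_product] at hjc
      obtain ⟨hjTb, hc⟩ := hjc
      rw [hTbdef, Finset.mem_filter] at hjTb
      have hjT : j ∈ T := hjTb.1
      have hj0 : 0 < (j : ℕ) := hjTb.2.1
      have hjk : (j : ℕ) < k := hjTb.2.2
      rw [htarget, Finset.mem_sigma]
      simp only [Finset.mem_insert, Finset.mem_singleton] at hc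
      rcases hc with hc | hc
      · subst hc
        rw [hF0]
        constructor
        · rw [hρf]; simp only [dif_pos hjk]; exact hρmem _
        · rw [Finset.mem_range, hρf]; simp only [dif_pos hjk]
          exact (Polynomial.rootMultiplicity_pos hp).2 (hρroot _)
      · subst hc
        rw [hF1]
        have hj1k : (j : ℕ) - 1 < k := by omega
        constructor
        · rw [hρf]; simp only [dif_pos hj1k]; exact hρmem _
        · rw [Finset.mem_range, hρf]; simp only [dif_pos hj1k]
          split_ifs with hprev
          · obtain ⟨j', hj'1, hj'T⟩ := hprev
            have hj'eq : j' = (⟨(j : ℕ) - 1, by omega⟩ : Fin (k + 1)) :=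
              Fin.ext hj'1
            rw [hj'eq] at hj'T
            exact hmult2 (j : ℕ) hj0 hjk hjT hj'T
          · exact (Polynomial.rootMultiplicity_pos hp).2 (hρroot _)
    have hinj : Set.InjOn F dom := by
      intro a ha b hb heq
      obtain ⟨j, c⟩ := a
      obtain ⟨j', c'⟩ := b
      rw [Finset.mem_coe, hdom, Finset.mem_product] at ha hb
      have haTb : j ∈ Tb := ha.1
      have hbTb : j' ∈ Tb := hb.1
      rw [hTbdef, Finset.mem_filter] at haTb hbTb
      have hjT : j ∈ T := haTb.1
      have hjc : 0 < (j : ℕ) ∧ (j : ℕ) < k := haTb.2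
      have hj'T : j' ∈ T := hbTb.1
      have hj'c : 0 < (j' : ℕ) ∧ (j' : ℕ) < k := hbTb.2
      have hjk : (j : ℕ) < k := hjc.2
      have hj0 : 0 < (j : ℕ) := hjc.1
      have hj'k : (j' : ℕ) < k := hj'c.2
      have hj'0 : 0 < (j' : ℕ) := hj'c.1
      have hc : c = 0 ∨ c = 1 := by
        have := ha.2; simp only [Finset.mem_insert, Finset.mem_singleton] at this
        exact this
      have hc' : c' = 0 ∨ c' = 1 := by
        have := hb.2; simp only [Finset.mem_insert, Finset.mem_singleton] at this
        exact this
      rcases hc with hc | hc <;> rcases hc' with hc' | hc' <;> subst hc <;> subst hc'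
      · rw [hF0, hF0] at heq
        have h1 := congrArg Sigma.fst heq
        simp only at h1
        exact Prod.ext (Fin.ext (hρfinj _ _ hjk hj'k h1)) rfl
      · exfalso
        rw [hF0, hF1] at heq
        have h1 := congrArg Sigma.fst heq
        have h2 := congrArg Sigma.snd heq
        simp only at h1 h2
        have hcond : ¬ (∃ j'' : Fin (k + 1), (j'' : ℕ) = (j' : ℕ) - 1 ∧ j'' ∈ T) := by
          intro hcond
          rw [if_pos hcond] at h2
          exact one_ne_zero h2.symm
        have hj1k : (j' : ℕ) - 1 < k := by omega
        exact hcond ⟨j, hρfinj _ _ hjk hj1k h1, hjT⟩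
      · exfalso
        rw [hF1, hF0] at heq
        have h1 := congrArg Sigma.fst heq
        have h2 := congrArg Sigma.snd heq
        simp only at h1 h2
        have hcond : ¬ (∃ j'' : Fin (k + 1), (j'' : ℕ) = (j : ℕ) - 1 ∧ j'' ∈ T) := by
          intro hcond
          rw [if_pos hcond] at h2
          exact one_ne_zero h2
        have hj1k : (j : ℕ) - 1 < k := by omega
        exact hcond ⟨j', (hρfinj _ _ hj1k hj'k h1).symm, hj'T⟩
      · rw [hF1, hF1] at heq
        have h1 := congrArg Sigma.fst heq
        simp only at h1
        have hj1k : (j : ℕ) - 1 < k := by omega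
        have hj'1k : (j' : ℕ) - 1 < k := by omega
        have h3 : (j : ℕ) - 1 = (j' : ℕ) - 1 := hρfinj _ _ hj1k hj'1k h1
        have h4 : (j : ℕ) = (j' : ℕ) := by omega
        exact Prod.ext (Fin.ext h4) rfl
    have hcards := Finset.card_le_card_of_injOn F hmaps hinj
    have hdomcard : dom.card = Tb.card * 2 := by
      rw [hdom, Finset.card_product]
      norm_num
    have htargetcard : target.card ≤ 2 * N := by
      rw [htarget, Finset.card_sigma]
      simp only [Finset.card_range]
      have hsum : ∑ r ∈ R, p.rootMultiplicity r = Multiset.card p.roots := by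
        rw [← Multiset.toFinset_sum_count_eq p.roots]
        exact Finset.sum_congr rfl fun r _ => (Polynomial.count_roots p).symm
      rw [hsum]
      exact le_trans (Polynomial.card_roots' p) hdeg
    omega
  have hTcard : T.card ≤ N + 2 := by
    have hsub : T ⊆ Tb ∪ {(⟨0, by omega⟩ : Fin (k + 1)), (⟨k, by omega⟩ : Fin (k + 1))} := by
      intro j hj
      rw [Finset.mem_union]
      by_cases h1 : 0 < (j : ℕ) ∧ (j : ℕ) < k
      · exact Or.inl (by rw [hTbdef, Finset.mem_filter]; exact ⟨hj, h1⟩)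
      · right
        have hjle : (j : ℕ) < k + 1 := j.2
        rw [Finset.mem_insert, Finset.mem_singleton]
        rcases Nat.eq_zero_or_pos (j : ℕ) with h | h
        · exact Or.inl (Fin.ext (show (j : ℕ) = 0 from h))
        · exact Or.inr (Fin.ext (show (j : ℕ) = k by omega))
    calc T.card ≤ (Tb ∪ {(⟨0, by omega⟩ : Fin (k + 1)), (⟨k, by omega⟩ : Fin (k + 1))}).card :=
          Finset.card_le_card hsub
      _ ≤ Tb.card + ({(⟨0, by omega⟩ : Fin (k + 1)), (⟨k, by omega⟩ : Fin (k + 1))} :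
          Finset (Fin (k + 1))).card := Finset.card_union_le _ _
      _ ≤ Tb.card + 2 := by
          have := Finset.card_insert_le (⟨0, by omega⟩ : Fin (k + 1))
            ({(⟨k, by omega⟩ : Fin (k + 1))} : Finset (Fin (k + 1)))
          simp only [Finset.card_singleton] at this
          omega
      _ ≤ N + 2 := by omega
  -- final packaging
  set l : List (Fin (k + 1)) := T.toList with hl
  have hlen : l.length ≤ N + 2 := by rw [hl, Finset.length_toList]; exact hTcard
  refine ⟨fun m => if h : (m : ℕ) < l.length then Sint (l.get ⟨m, h⟩) else ∅, ?_, ?_⟩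
  · intro m
    by_cases h : (m : ℕ) < l.length
    · simp only [dif_pos h]
      exact ⟨hSopen _, (hSconv _).isPreconnected⟩
    · simp only [dif_neg h]
      exact ⟨isOpen_empty, isPreconnected_empty⟩
  · rw [hU]
    ext y
    simp only [Set.mem_iUnion, exists_prop]
    constructor
    · rintro ⟨j, hjT, hyj⟩
      have hjl : j ∈ l := by rw [hl]; exact Finset.mem_toList.2 hjT
      obtain ⟨idx, hidx⟩ := List.mem_iff_get.1 hjl
      have hidxlt : (idx : ℕ) < l.length := idx.2
      refine ⟨⟨(idx : ℕ), by omega⟩, ?_⟩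
      have hcnd : (((⟨(idx : ℕ), by omega⟩ : Fin (N + 2))) : ℕ) < l.length := hidxlt
      simp only [dif_pos hcnd]
      have hgj : l.get ⟨(idx : ℕ), hcnd⟩ = j := hidx
      rw [hgj]
      exact hyj
    · rintro ⟨m, hm⟩
      by_cases h : (m : ℕ) < l.length
      · simp only [dif_pos h] at hm
        refine ⟨l.get ⟨m, h⟩, ?_, hm⟩
        exact Finset.mem_toList.1 (l.get_mem _)
      · simp only [dif_neg h] at hm
        exact absurd hm (Set.notMem_empty y)

end GDAux

/-- For a polynomial objective `f` of degree at most `Δ`, the set of step sizes `η` at which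
the `i`-th iterate has squared gradient norm below `θ²` is a union of at most `Δ^(i-1) + 1`
open intervals (i.e. connected open subsets of `ℝ`, possibly unbounded or empty). -/
theorem gd_poly_sublevel_intervals
    {d Δ : ℕ} (hΔ : 1 ≤ Δ) (f : EuclideanSpace ℝ (Fin d) → ℝ) (hf : IsPolyDeg Δ f)
    (x : EuclideanSpace ℝ (Fin d)) (θ : ℝ) (hθ : 0 < θ) :
    ∀ i : ℕ, 1 ≤ i →
      ∃ S : Fin (Δ ^ (i - 1) + 1) → Set ℝ,
        (∀ k, IsOpen (S k) ∧ IsPreconnected (S k)) ∧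
        {η : ℝ | ‖gradient f (gdIter f x η (i - 1))‖ ^ 2 < θ ^ 2} = ⋃ k, S k := by
  obtain ⟨P, hP, hfP⟩ := hf
  intro i hi
  set n : ℕ := i - 1 with hn
  obtain ⟨q, hq, hqe⟩ := GDAux.iter_repr hΔ P hP f hfP x n
  set G : Fin d → Polynomial ℝ :=
    fun j => MvPolynomial.aeval q (MvPolynomial.pderiv j P) with hG
  set p : Polynomial ℝ := (∑ j, (G j) ^ 2) - Polynomial.C (θ ^ 2) with hpdef
  have hGdeg : ∀ j, (G j).natDegree ≤ (Δ - 1) * GDAux.degE Δ n := by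
    intro j
    rw [hG]
    refine le_trans (GDAux.natDegree_mv_aeval_le q hq _) ?_
    exact Nat.mul_le_mul_right _ (GDAux.totalDegree_pderiv_le P j hΔ hP)
  have h1Δ : 1 ≤ Δ ^ n := Nat.one_le_pow _ _ (by omega)
  have hpdeg : p.natDegree ≤ 2 * (Δ ^ n - 1) := by
    rw [hpdef]
    refine le_trans (Polynomial.natDegree_sub_le _ _) ?_
    have hbd := GDAux.degE_bound hΔ n
    have hsum : (∑ j, (G j) ^ 2).natDegree ≤ 2 * (Δ ^ n - 1) := by
      refine Polynomial.natDegree_sum_le_of_forall_le _ _ ?_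
      intro j _
      refine le_trans (Polynomial.natDegree_pow_le) ?_
      have := hGdeg j
      omega
    have hC : (Polynomial.C (θ ^ 2)).natDegree = 0 := Polynomial.natDegree_C _
    omega
  have hnorm : ∀ η : ℝ, ‖gradient f (gdIter f x η n)‖ ^ 2
      = ∑ j, ((G j).eval η) ^ 2 := by
    intro η
    rw [GDAux.gradient_mv P f hfP]
    rw [EuclideanSpace.norm_eq]
    rw [Real.sq_sqrt (Finset.sum_nonneg fun j _ => sq_nonneg _)]
    refine Finset.sum_congr rfl fun j _ => ?_
    rw [WithLp.equiv_symm_apply, PiLp.toLp_apply, Real.norm_eq_abs, sq_abs]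
    have hco : (fun i' => gdIter f x η n i') = fun i' => (q i').eval η :=
      funext fun i' => hqe η i'
    rw [hco, ← GDAux.eval_mv_aeval, hG]
  have hpeval : ∀ η : ℝ, p.eval η = (∑ j, ((G j).eval η) ^ 2) - θ ^ 2 := by
    intro η
    rw [hpdef]
    simp [Polynomial.eval_finset_sum]
  have hset : {η : ℝ | ‖gradient f (gdIter f x η n)‖ ^ 2 < θ ^ 2}
      = {η : ℝ | p.eval η < 0} := by
    ext η
    simp only [Set.mem_setOf_eq, hnorm η, hpeval η]
    constructor
    · intro h; linarith
    · intro h; linarith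
  have hidx : Δ ^ n + 1 = (Δ ^ n - 1) + 2 := by omega
  rw [hset, hidx]
  by_cases hp0 : p = 0
  · refine ⟨fun _ => ∅, fun _ => ⟨isOpen_empty, isPreconnected_empty⟩, ?_⟩
    ext η
    simp [hp0]
  · exact GDAux.sublevel_union_intervals p hp0 (Δ ^ n - 1) (by omega)
end
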